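/- arXiv:2102.10907 — 5 statements merged into one kernel-verified Lean document; each statement's English description precedes it below -/
import Mathlib

section
/- Piola identity: let n ≥ 1 and let φ : ℝⁿ → ℝⁿ be twice continuously differentiable. For X ∈ ℝⁿ let F(X) be the n×n Jacobian matrix with entries F(X)_{a i} = ∂φᵃ/∂Xⁱ(X), and let adj F(X) be its adjugate, so that F(X) · adj F(X) = det(F(X)) · I. Then for every index a ∈ {1,…,n} and every X ∈ ℝⁿ, Σ_{i=1}^{n} ∂/∂Xⁱ [ (adj F(X))_{i a} ] = 0; that is, for each a the vector field X ↦ ((adj F(X))_{1 a}, …, (adj F(X))_{n a}) is divergence-free. -/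
open Matrix Finset

noncomputable def detCM (n : ℕ) : ContinuousMultilinearMap ℝ (fun _ : Fin n => (Fin n → ℝ)) ℝ :=
  MultilinearMap.mkContinuous (Matrix.detRowAlternating (n := Fin n) (R := ℝ)).toMultilinearMap
    (n.factorial) (by
      intro m
      have hle : ∀ (σ : Equiv.Perm (Fin n)), ‖(Equiv.Perm.sign σ : ℤ) • ∏ i, m (σ i) i‖ ≤ ∏ i, ‖m i‖ := by
        intro σ
        have h1 : ‖(Equiv.Perm.sign σ : ℤ) • ∏ i, m (σ i) i‖ = ‖∏ i, m (σ i) i‖ := by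
          rcases Int.units_eq_one_or (Equiv.Perm.sign σ) with h | h <;> simp [h]
        rw [h1]
        calc ‖∏ i, m (σ i) i‖ ≤ ∏ i, ‖m (σ i) i‖ := norm_prod_le _ _
          _ ≤ ∏ i, ‖m (σ i)‖ := by
              refine Finset.prod_le_prod (fun _ _ => norm_nonneg _) (fun i _ => norm_le_pi_norm _ _)
          _ = ∏ i, ‖m i‖ := Equiv.prod_comp σ (fun b => ‖m b‖)
      calc ‖(Matrix.detRowAlternating (n := Fin n) (R := ℝ)).toMultilinearMap m‖
          = ‖∑ σ : Equiv.Perm (Fin n), (Equiv.Perm.sign σ : ℤ) • ∏ i, m (σ i) i‖ := by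
            rw [show ((Matrix.detRowAlternating (n := Fin n) (R := ℝ)).toMultilinearMap m : ℝ)
              = (Matrix.of m).det from rfl, Matrix.det_apply]
            norm_num [Units.smul_def]
        _ ≤ ∑ σ : Equiv.Perm (Fin n), ∏ i, ‖m i‖ := (norm_sum_le _ _).trans
            (Finset.sum_le_sum fun σ _ => hle σ)
        _ = (n.factorial : ℝ) * ∏ i, ‖m i‖ := by
            rw [Finset.sum_const, Finset.card_univ, Fintype.card_perm, nsmul_eq_mul]
            simp)

lemma detCM_apply (n : ℕ) (m : Fin n → (Fin n → ℝ)) : detCM n m = (Matrix.of m).det := rfl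

lemma adj_eq (n : ℕ) (M : Matrix (Fin n) (Fin n) ℝ) (i a : Fin n) :
    M.adjugate i a = detCM n (Function.update (fun b => M b) a (Pi.single i 1)) := by
  rw [Matrix.adjugate_apply]; rfl

lemma cancel_symm_antisymm {n : ℕ} (c T : Fin n → Fin n → ℝ)
    (hc : ∀ i j, c i j = c j i) (hT : ∀ i j, T i j = - T j i) :
    ∑ i, ∑ j, c i j * T i j = 0 := by
  have h : (∑ i, ∑ j, c i j * T i j) = ∑ i, ∑ j, -(c i j * T i j) := by
    rw [Finset.sum_comm]
    refine Finset.sum_congr rfl fun x _ => Finset.sum_congr rfl fun y _ => ?_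
    rw [hc y x, hT y x]
    ring
  rw [Finset.sum_congr rfl (fun x _ => Finset.sum_neg_distrib (ι := Fin n) _),
    Finset.sum_neg_distrib] at h
  linarith


/-- **Piola identity**: for a twice continuously differentiable map `φ : ℝⁿ → ℝⁿ`
with Jacobian matrix `F(X)_{a i} = ∂φᵃ/∂Xⁱ(X)`, each column of the adjugate of `F`
is divergence free: `∑ᵢ ∂/∂Xⁱ (adj F(X))_{i a} = 0`. -/
theorem piola_identity
    (n : ℕ) (hn : 1 ≤ n)
    (φ : (Fin n → ℝ) → (Fin n → ℝ)) (hφ : ContDiff ℝ 2 φ)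
    (F : (Fin n → ℝ) → Matrix (Fin n) (Fin n) ℝ)
    (hF : ∀ X a i, F X a i = fderiv ℝ φ X (Pi.single i 1) a) :
    ∀ (a : Fin n) (X : Fin n → ℝ),
      ∑ i : Fin n, fderiv ℝ (fun Y => (F Y).adjugate i a) X (Pi.single i 1) = 0 := by

  intro a X
  classical
  set e : Fin n → (Fin n → ℝ) := fun i => Pi.single i 1 with he
  have hφ1 : ContDiff ℝ 1 (fderiv ℝ φ) := hφ.fderiv_right (by norm_num)
  set B := fderiv ℝ (fderiv ℝ φ) X with hBdef
  have hB : HasFDerivAt (fderiv ℝ φ) B X := (hφ1.differentiable (by norm_num) X).hasFDerivAt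
  have hBsymm : ∀ v w, B v w = B w v := fun v w =>
    second_derivative_symmetric (f := φ)
      (fun y => (hφ.differentiable (by norm_num) y).hasFDerivAt) hB v w
  -- rows extractor
  let Llin : ((Fin n → ℝ) →L[ℝ] (Fin n → ℝ)) →ₗ[ℝ] (Fin n → (Fin n → ℝ)) :=
    { toFun := fun T b i => T (e i) b
      map_add' := by intro T S; funext b i; simp
      map_smul' := by intro c T; funext b i; simp }
  let L : ((Fin n → ℝ) →L[ℝ] (Fin n → ℝ)) →L[ℝ] (Fin n → (Fin n → ℝ)) :=
    LinearMap.toContinuousLinearMap Llin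
  have hLapp : ∀ T b i, L T b i = T (e i) b := fun T b i => rfl
  have hG : HasFDerivAt (fun Y => L (fderiv ℝ φ Y)) (L.comp B) X :=
    L.hasFDerivAt.comp X hB
  -- update-with-zero map
  let Ulin : (Fin n → (Fin n → ℝ)) →ₗ[ℝ] (Fin n → (Fin n → ℝ)) :=
    { toFun := fun m => Function.update m a 0
      map_add' := by
        intro m m'; funext b
        by_cases h : b = a
        · subst h; simp
        · simp [Function.update_apply, h]
      map_smul' := by
        intro c m; funext b
        by_cases h : b = a
        · subst h; simp
        · simp [Function.update_apply, h] }
  let U : (Fin n → (Fin n → ℝ)) →L[ℝ] (Fin n → (Fin n → ℝ)) :=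
    LinearMap.toContinuousLinearMap Ulin
  have hUapp : ∀ m, U m = Function.update m a 0 := fun m => rfl
  set m0 : Fin n → (Fin n → ℝ) := L (fderiv ℝ φ X) with hm0
  -- derivative of each adjugate entry
  have key : ∀ i : Fin n,
      fderiv ℝ (fun Y => (F Y).adjugate i a) X (e i)
        = ∑ k : Fin n, detCM n (Function.update (Function.update m0 a (e i)) k
            (Function.update (L (B (e i))) a 0 k)) := by
    intro i
    have hgf : HasFDerivAt (fun Y => Function.update (L (fderiv ℝ φ Y)) a (e i))
        ((U.comp (L.comp B))) X := by
      have h1 : HasFDerivAt (fun Y => U (L (fderiv ℝ φ Y)) + Pi.single a (e i))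
          (U.comp (L.comp B)) X := by
        exact (U.hasFDerivAt.comp X hG).add_const _
      have h2 : (fun Y => Function.update (L (fderiv ℝ φ Y)) a (e i))
          = fun Y => U (L (fderiv ℝ φ Y)) + Pi.single a (e i) := by
        funext Y; funext b
        rw [hUapp]
        by_cases h : b = a
        · subst h; simp
        · simp [Function.update_apply, h, Pi.single_apply]
      rw [h2]; exact h1
    have hD : HasFDerivAt (fun Y => detCM n (Function.update (L (fderiv ℝ φ Y)) a (e i)))
        (((detCM n).linearDeriv (Function.update m0 a (e i))).comp (U.comp (L.comp B))) X := by
      exact ((detCM n).hasFDerivAt _).comp X hgf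
    have hfun : (fun Y => (F Y).adjugate i a)
        = fun Y => detCM n (Function.update (L (fderiv ℝ φ Y)) a (e i)) := by
      funext Y
      rw [adj_eq]
      congr 1
      funext b
      by_cases h : b = a
      · subst h; simp [he]
      · simp only [Function.update_apply, h, if_false]
        funext j
        rw [hF, hLapp]
    rw [hfun, hD.fderiv]
    simp only [ContinuousLinearMap.coe_comp', Function.comp_apply]
    rw [ContinuousMultilinearMap.linearDeriv_apply]
    rfl
  -- split off the k = a term and rewrite
  have key2 : ∀ i : Fin n,
      fderiv ℝ (fun Y => (F Y).adjugate i a) X (e i)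
        = ∑ k ∈ Finset.univ.erase a,
            ∑ j, B (e i) (e j) k * detCM n (Function.update (Function.update m0 a (e i)) k (e j)) := by
    intro i
    rw [key i, ← Finset.add_sum_erase _ _ (Finset.mem_univ a)]
    have h0 : detCM n (Function.update (Function.update m0 a (e i)) a
        (Function.update (L (B (e i))) a 0 a)) = 0 := by
      rw [Function.update_self, Function.update_idem]
      exact (detCM n).map_update_zero _ _
    rw [h0, zero_add]
    refine Finset.sum_congr rfl fun k hk => ?_
    have hka : k ≠ a := Finset.ne_of_mem_erase hk
    rw [Function.update_of_ne hka]
    have hvec : L (B (e i)) k = ∑ j, B (e i) (e j) k • e j := by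
      funext j'
      rw [hLapp, Finset.sum_apply]
      simp [he, Pi.single_apply, mul_ite]
    rw [hvec, ← ContinuousMultilinearMap.coe_coe,
      (detCM n).toMultilinearMap.map_update_sum Finset.univ k (fun j => B (e i) (e j) k • e j) _]
    refine Finset.sum_congr rfl fun j _ => ?_
    rw [MultilinearMap.map_update_smul]
    simp [smul_eq_mul]
  rw [Finset.sum_congr rfl fun i _ => key2 i, Finset.sum_comm]
  refine Finset.sum_eq_zero fun k hk => ?_
  have hka : k ≠ a := Finset.ne_of_mem_erase hk
  refine cancel_symm_antisymm (fun i j => B (e i) (e j) k)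
    (fun i j => detCM n (Function.update (Function.update m0 a (e i)) k (e j)))
    (fun i j => congrFun (hBsymm (e i) (e j)) k) (fun i j => ?_)
  have hmap := (Matrix.detRowAlternating (n := Fin n) (R := ℝ)).map_swap
    (Function.update (Function.update m0 a (e j)) k (e i)) (Ne.symm hka)
  have hco : ∀ m : Fin n → (Fin n → ℝ), detCM n m = Matrix.detRowAlternating m := fun m => rfl
  simp only [hco]
  have hswap2 : (Function.update (Function.update m0 a (e j)) k (e i)) ∘ (Equiv.swap a k)
      = Function.update (Function.update m0 a (e i)) k (e j) := by
    funext b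
    rcases eq_or_ne b a with rfl | hba
    · simp [Equiv.swap_apply_left, Function.update_apply, hka, Ne.symm hka]
    · rcases eq_or_ne b k with rfl | hbk
      · simp [Equiv.swap_apply_right, Function.update_apply, hka, Ne.symm hka]
      · simp [Equiv.swap_apply_of_ne_of_ne hba hbk, Function.update_apply, hba, hbk]
  rw [hswap2] at hmap
  exact hmap
end

section
/- Let n ≥ 1, let φ : ℝⁿ → ℝⁿ be twice continuously differentiable, and let p : ℝⁿ → ℝ be continuously differentiable. With F(X) the Jacobian matrix of φ (entries F(X)_{a i} = ∂φᵃ/∂Xⁱ) and adj F its adjugate, for every index a ∈ {1,…,n} and every X ∈ ℝⁿ one has Σ_{i=1}^{n} ∂/∂Xⁱ [ p(φ(X)) · (adj F(X))_{i a} ] = det(F(X)) · (∂p/∂xᵃ)(φ(X)). -/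
open Matrix

/-- The determinant as a continuous multilinear map in the rows. -/
noncomputable def detCML (n : ℕ) :
    ContinuousMultilinearMap ℝ (fun _ : Fin n => (Fin n → ℝ)) ℝ :=
  MultilinearMap.mkContinuous
    (Matrix.detRowAlternating : (Fin n → ℝ) [⋀^Fin n]→ₗ[ℝ] ℝ).toMultilinearMap
    (Nat.factorial n) (by
      intro m
      calc ‖(Matrix.detRowAlternating : (Fin n → ℝ) [⋀^Fin n]→ₗ[ℝ] ℝ).toMultilinearMap m‖
          = ‖∑ σ : Equiv.Perm (Fin n), Equiv.Perm.sign σ • ∏ i, Matrix.of m (σ i) i‖ := by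
            rw [show (Matrix.detRowAlternating : (Fin n → ℝ) [⋀^Fin n]→ₗ[ℝ] ℝ).toMultilinearMap m
              = Matrix.det (Matrix.of m) from rfl, Matrix.det_apply]
        _ ≤ ∑ σ : Equiv.Perm (Fin n), ‖Equiv.Perm.sign σ • ∏ i, Matrix.of m (σ i) i‖ :=
            norm_sum_le _ _
        _ ≤ ∑ σ : Equiv.Perm (Fin n), ∏ i, ‖m i‖ := by
            refine Finset.sum_le_sum fun σ _ => ?_
            have hs : ‖Equiv.Perm.sign σ • ∏ i, Matrix.of m (σ i) i‖
                = ‖∏ i, m (σ i) i‖ := by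
              rcases Int.units_eq_one_or (Equiv.Perm.sign σ) with h | h <;>
                simp [h, Matrix.of_apply]
            rw [hs]
            calc ‖∏ i, m (σ i) i‖ ≤ ∏ i, ‖m (σ i) i‖ := by
                  rw [Real.norm_eq_abs, Finset.abs_prod]; exact le_of_eq rfl
              _ ≤ ∏ i, ‖m (σ i)‖ :=
                  Finset.prod_le_prod (fun i _ => norm_nonneg _)
                    (fun i _ => norm_le_pi_norm (m (σ i)) i)
              _ = ∏ i, ‖m i‖ := Equiv.prod_comp σ (fun b => ‖m b‖)
        _ = (Nat.factorial n : ℝ) * ∏ i, ‖m i‖ := by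
            rw [Finset.sum_const, Finset.card_univ, Fintype.card_perm, Fintype.card_fin,
              nsmul_eq_mul]
      )

lemma detCML_apply (n : ℕ) (M : Matrix (Fin n) (Fin n) ℝ) :
    detCML n (fun b => M b) = M.det := rfl

lemma update_rows_eq (n : ℕ) (M : Matrix (Fin n) (Fin n) ℝ) (b : Fin n) (w : Fin n → ℝ) :
    Function.update (fun c => M c) b w = fun c => (M.updateRow b w) c := by
  funext c
  by_cases h : c = b <;> simp [Matrix.updateRow_apply, h, Function.update_apply]

lemma detCML_update (n : ℕ) (M : Matrix (Fin n) (Fin n) ℝ) (b : Fin n) (w : Fin n → ℝ) :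
    detCML n (Function.update (fun c => M c) b w) = (M.updateRow b w).det := by
  rw [update_rows_eq, detCML_apply]

lemma pi_expand (n : ℕ) (w : Fin n → ℝ) : w = ∑ j, w j • (Pi.single j 1 : Fin n → ℝ) := by
  funext k
  simp [Pi.single_apply]

/-- Expansion of determinant along one (replaced) row. -/
lemma det_updateRow_expand (n : ℕ) (M : Matrix (Fin n) (Fin n) ℝ) (b : Fin n) (w : Fin n → ℝ) :
    (M.updateRow b w).det = ∑ j, w j * (M.updateRow b (Pi.single j 1)).det := by
  have h1 : ∀ u : Fin n → ℝ, (M.updateRow b u).det = cramer Mᵀ u b := by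
    intro u
    rw [cramer_apply, updateCol_transpose, det_transpose]
  rw [h1]
  conv_lhs => rw [pi_expand n w]
  rw [map_sum]
  simp only [Finset.sum_apply, Pi.smul_apply, LinearMap.map_smul, smul_eq_mul]
  refine Finset.sum_congr rfl fun j _ => ?_
  rw [← h1]

/-- Reference-configuration form of the pressure-gradient term: for `φ : ℝⁿ → ℝⁿ`
twice continuously differentiable with Jacobian matrix `F(X)_{a i} = ∂φᵃ/∂Xⁱ(X)` and
`p : ℝⁿ → ℝ` continuously differentiable,
`∑ᵢ ∂/∂Xⁱ [ p(φ(X)) (adj F(X))_{i a} ] = det F(X) · (∂p/∂xᵃ)(φ(X))`. -/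
theorem material_divergence_of_pressure_term
    (n : ℕ) (hn : 1 ≤ n)
    (φ : (Fin n → ℝ) → (Fin n → ℝ)) (hφ : ContDiff ℝ 2 φ)
    (p : (Fin n → ℝ) → ℝ) (hp : ContDiff ℝ 1 p)
    (F : (Fin n → ℝ) → Matrix (Fin n) (Fin n) ℝ)
    (hF : ∀ X a i, F X a i = fderiv ℝ φ X (Pi.single i 1) a) :
    ∀ (a : Fin n) (X : Fin n → ℝ),
      ∑ i : Fin n, fderiv ℝ (fun Y => p (φ Y) * (F Y).adjugate i a) X (Pi.single i 1)
        = (F X).det * fderiv ℝ p (φ X) (Pi.single a 1) := by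
  classical
  intro a X
  have hφ1 : Differentiable ℝ φ := hφ.differentiable (by norm_num)
  have hDφ : ContDiff ℝ 1 (fderiv ℝ φ) := hφ.fderiv_right (by norm_num)
  set B := fderiv ℝ (fderiv ℝ φ) X with hBdef
  have hBd : HasFDerivAt (fderiv ℝ φ) B X :=
    ((hDφ.differentiable one_ne_zero) X).hasFDerivAt
  have hsymm : ∀ v w, B v w = B w v :=
    second_derivative_symmetric (fun y => (hφ1 y).hasFDerivAt) hBd
  -- row evaluation CLM
  set Λ : Fin n → ((Fin n → ℝ) →L[ℝ] (Fin n → ℝ)) →L[ℝ] (Fin n → ℝ) := fun b =>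
    ContinuousLinearMap.pi (fun j =>
      (ContinuousLinearMap.proj b).comp
        (ContinuousLinearMap.apply ℝ (Fin n → ℝ) (Pi.single j 1))) with hΛdef
  have hΛ : ∀ b L j, Λ b L j = L (Pi.single j 1) b := by intro b L j; rfl
  have hrow : ∀ b, HasFDerivAt (fun Y => F Y b) ((Λ b).comp B) X := by
    intro b
    have heq : (fun Y => F Y b) = (fun Y => Λ b (fderiv ℝ φ Y)) := by
      funext Y; funext j
      rw [hΛ, hF]
    rw [heq]
    exact ((Λ b).hasFDerivAt).comp X hBd
  -- derivative of adjugate entries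
  set g' : Fin n → ((Fin n → ℝ) →L[ℝ] (Fin n → ℝ)) := fun b =>
    if b = a then 0 else (Λ b).comp B with hg'def
  have hg : ∀ (i b : Fin n),
      HasFDerivAt (fun Y => (F Y).updateRow a (Pi.single i (1:ℝ)) b) (g' b) X := by
    intro i b
    by_cases hb : b = a
    · subst hb
      simp only [Matrix.updateRow_self, hg'def, if_pos rfl]
      exact hasFDerivAt_const _ _
    · simp only [Matrix.updateRow_ne hb, hg'def, if_neg hb]
      exact hrow b
  set Dadj : Fin n → ((Fin n → ℝ) →L[ℝ] ℝ) := fun i =>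
    ∑ b, ((detCML n).toContinuousLinearMap
        (fun c => (F X).updateRow a (Pi.single i (1:ℝ)) c) b).comp (g' b) with hDadjdef
  have hadj : ∀ i : Fin n,
      HasFDerivAt (fun Y => (F Y).adjugate i a) (Dadj i) X := by
    intro i
    have h := HasFDerivAt.multilinear_comp (detCML n)
      (g := fun b Y => (F Y).updateRow a (Pi.single i (1:ℝ)) b) (g' := g') (hg i)
    have heq : (fun Y => detCML n (fun b => (F Y).updateRow a (Pi.single i (1:ℝ)) b))
        = (fun Y => (F Y).adjugate i a) := by
      funext Y
      rw [detCML_apply, adjugate_apply]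
    rwa [heq] at h
  -- derivative of p ∘ φ
  set q' : (Fin n → ℝ) →L[ℝ] ℝ := (fderiv ℝ p (φ X)).comp (fderiv ℝ φ X) with hq'def
  have hq : HasFDerivAt (fun Y => p (φ Y)) q' X :=
    ((hp.differentiable one_ne_zero (φ X)).hasFDerivAt).comp X (hφ1 X).hasFDerivAt
  have hfd : ∀ i : Fin n, fderiv ℝ (fun Y => p (φ Y) * (F Y).adjugate i a) X
      = p (φ X) • Dadj i + (F X).adjugate i a • q' := fun i => (hq.mul (hadj i)).fderiv
  -- Part I : chain-rule term
  have hP1 : ∀ i : Fin n, q' (Pi.single i 1)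
      = ∑ b, F X b i * fderiv ℝ p (φ X) (Pi.single b 1) := by
    intro i
    have h1 : fderiv ℝ φ X (Pi.single i 1) = ∑ b, F X b i • (Pi.single b 1 : Fin n → ℝ) := by
      rw [show fderiv ℝ φ X (Pi.single i 1) = fun b => F X b i from
        funext fun b => (hF X b i).symm]
      exact pi_expand n _
    rw [hq'def, ContinuousLinearMap.comp_apply, h1, map_sum]
    simp [smul_eq_mul]
  have partI : ∑ i, (F X).adjugate i a * q' (Pi.single i 1)
      = (F X).det * fderiv ℝ p (φ X) (Pi.single a 1) := by
    simp_rw [hP1, Finset.mul_sum]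
    rw [Finset.sum_comm]
    have hmul : ∀ b, ∑ i, F X b i * (F X).adjugate i a
        = (F X).det * (if b = a then (1:ℝ) else 0) := by
      intro b
      have h2 : ∑ i, F X b i * (F X).adjugate i a = (F X * (F X).adjugate) b a :=
        (Matrix.mul_apply).symm
      rw [h2, Matrix.mul_adjugate, Matrix.smul_apply, Matrix.one_apply, smul_eq_mul]
    calc ∑ b, ∑ i, (F X).adjugate i a * (F X b i * fderiv ℝ p (φ X) (Pi.single b 1))
        = ∑ b, fderiv ℝ p (φ X) (Pi.single b 1) * ∑ i, F X b i * (F X).adjugate i a := by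
          refine Finset.sum_congr rfl fun b _ => ?_
          rw [Finset.mul_sum]
          refine Finset.sum_congr rfl fun i _ => by ring
      _ = ∑ b, fderiv ℝ p (φ X) (Pi.single b 1) * ((F X).det * (if b = a then (1:ℝ) else 0)) := by
          simp_rw [hmul]
      _ = (F X).det * fderiv ℝ p (φ X) (Pi.single a 1) := by
          rw [Finset.sum_eq_single a]
          · simp [mul_comm]
          · intro b _ hb; simp [hb]
          · intro h; exact absurd (Finset.mem_univ a) h
  -- Part II : Piola identity
  have piola : ∑ i, Dadj i (Pi.single i 1) = 0 := by
    set T : Fin n → Fin n → Fin n → ℝ := fun b i j =>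
      (((F X).updateRow a (Pi.single i 1)).updateRow b (Pi.single j 1)).det with hT
    have hterma : ∀ i : Fin n,
        detCML n (Function.update (fun c => ((F X).updateRow a (Pi.single i (1:ℝ))) c) a
          (g' a (Pi.single i 1))) = 0 := by
      intro i
      rw [show g' a (Pi.single i (1:ℝ)) = 0 from by simp [hg'def], detCML_update]
      exact det_eq_zero_of_row_eq_zero a (by simp)
    have hterm : ∀ (i b : Fin n), b ≠ a →
        detCML n (Function.update (fun c => ((F X).updateRow a (Pi.single i (1:ℝ))) c) b
          (g' b (Pi.single i 1)))
        = ∑ j, B (Pi.single i 1) (Pi.single j 1) b * T b i j := by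
      intro i b hb
      rw [detCML_update,
        show g' b (Pi.single i (1:ℝ)) = fun j => B (Pi.single i 1) (Pi.single j 1) b from by
          funext j
          simp only [hg'def, if_neg hb, ContinuousLinearMap.comp_apply]
          rw [hΛ],
        det_updateRow_expand]
    have hanti : ∀ (b : Fin n), b ≠ a → ∀ i j, T b j i = - T b i j := by
      intro b hb i j
      have hswap : ((((F X).updateRow a (Pi.single i 1)).updateRow b
          (Pi.single j 1)).submatrix (Equiv.swap a b) id)
          = (((F X).updateRow a (Pi.single j 1)).updateRow b (Pi.single i 1)) := by
        ext k l
        rw [Matrix.submatrix_apply, id_eq]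
        rcases eq_or_ne k a with rfl | hka
        · rw [Equiv.swap_apply_left]
          simp [Matrix.updateRow_apply, hb, Ne.symm hb]
        · rcases eq_or_ne k b with rfl | hkb
          · rw [Equiv.swap_apply_right]
            simp [Matrix.updateRow_apply, hb, Ne.symm hb]
          · rw [Equiv.swap_apply_of_ne_of_ne hka hkb]
            simp [Matrix.updateRow_apply, hka, hkb]
      have hperm := Matrix.det_permute (Equiv.swap a b)
        (((F X).updateRow a (Pi.single i 1)).updateRow b (Pi.single j 1))
      rw [hT]
      simp only []
      rw [← hswap, hperm, Equiv.Perm.sign_swap (Ne.symm hb)]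
      simp
    have hzero : ∀ b : Fin n, b ≠ a →
        ∑ i, ∑ j, B (Pi.single i 1) (Pi.single j 1) b * T b i j = 0 := by
      intro b hb
      have h1 : ∑ i, ∑ j, B (Pi.single i 1) (Pi.single j 1) b * T b i j
          = ∑ j, ∑ i, B (Pi.single i 1) (Pi.single j 1) b * T b i j := Finset.sum_comm
      have h2 : ∀ i j : Fin n, B (Pi.single j 1) (Pi.single i 1) b * T b j i
          = -(B (Pi.single i 1) (Pi.single j 1) b * T b i j) := by
        intro i j
        rw [congrFun (hsymm (Pi.single j 1) (Pi.single i 1)) b, hanti b hb i j]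
        ring
      have h3 : ∑ i, ∑ j, B (Pi.single i 1) (Pi.single j 1) b * T b i j
          = -∑ i, ∑ j, B (Pi.single i 1) (Pi.single j 1) b * T b i j := by
        conv_lhs => rw [h1]
        rw [← Finset.sum_neg_distrib]
        refine Finset.sum_congr rfl fun j _ => ?_
        rw [← Finset.sum_neg_distrib]
        refine Finset.sum_congr rfl fun i _ => ?_
        rw [← h2]
      linarith
    have hDadjval : ∀ i : Fin n, Dadj i (Pi.single i 1)
        = ∑ b, detCML n (Function.update
            (fun c => ((F X).updateRow a (Pi.single i (1:ℝ))) c) b (g' b (Pi.single i 1))) := by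
      intro i
      rw [hDadjdef]
      simp
    calc ∑ i, Dadj i (Pi.single i 1)
        = ∑ i, ∑ b, detCML n (Function.update
            (fun c => ((F X).updateRow a (Pi.single i (1:ℝ))) c) b (g' b (Pi.single i 1))) := by
          exact Finset.sum_congr rfl fun i _ => hDadjval i
      _ = ∑ b, ∑ i, detCML n (Function.update
            (fun c => ((F X).updateRow a (Pi.single i (1:ℝ))) c) b (g' b (Pi.single i 1))) :=
          Finset.sum_comm
      _ = 0 := by
          refine Finset.sum_eq_zero fun b _ => ?_
          by_cases hb : b = a
          · subst hb
            exact Finset.sum_eq_zero fun i _ => hterma i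
          · rw [Finset.sum_congr rfl fun i _ => hterm i b hb]
            exact hzero b hb
  -- assemble
  calc ∑ i : Fin n, fderiv ℝ (fun Y => p (φ Y) * (F Y).adjugate i a) X (Pi.single i 1)
      = ∑ i : Fin n, (p (φ X) • Dadj i + (F X).adjugate i a • q') (Pi.single i 1) := by
        exact Finset.sum_congr rfl fun i _ => by rw [hfd i]
    _ = ∑ i : Fin n, (p (φ X) * Dadj i (Pi.single i 1)
          + (F X).adjugate i a * q' (Pi.single i 1)) := by
        simp [smul_eq_mul]
    _ = p (φ X) * (∑ i, Dadj i (Pi.single i 1))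
          + ∑ i, (F X).adjugate i a * q' (Pi.single i 1) := by
        rw [Finset.sum_add_distrib, Finset.mul_sum]
    _ = (F X).det * fderiv ℝ p (φ X) (Pi.single a 1) := by
        rw [piola, partI, mul_zero, zero_add]
end

section
/- Continuity equation: in the continuum setup, assume in addition that for every t the map φ(t,·) is a C¹ diffeomorphism of ℝⁿ, that ρ : ℝ × ℝⁿ → ℝ is continuously differentiable, that ρ₀ : ℝⁿ → ℝ is a given function, and that the mass relation ρ₀(X) = ρ(t, φ(t,X)) · det F(t,X) holds for all (t,X). Then ∂ρ/∂t(t,x) + div_x(ρ u)(t,x) = 0 for every (t,x) ∈ ℝ × ℝⁿ. -/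
/-- Determinant (as a function of the rows) as a continuous multilinear map. -/
noncomputable def detCMM (n : ℕ) :
    ContinuousMultilinearMap ℝ (fun _ : Fin n => (Fin n → ℝ)) ℝ :=
  MultilinearMap.mkContinuous
    (Matrix.detRowAlternating : (Fin n → ℝ) [⋀^Fin n]→ₗ[ℝ] ℝ).toMultilinearMap
    (n.factorial) <| by
  intro m
  show ‖(Matrix.of m).det‖ ≤ (n.factorial : ℝ) * ∏ i, ‖m i‖
  rw [Matrix.det_apply]
  refine le_trans (norm_sum_le _ _) ?_
  have key : ∀ σ : Equiv.Perm (Fin n),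
      ‖Equiv.Perm.sign σ • ∏ i, Matrix.of m (σ i) i‖ ≤ ∏ i, ‖m i‖ := by
    intro σ
    have h1 : ‖Equiv.Perm.sign σ • ∏ i, Matrix.of m (σ i) i‖
        = ‖∏ i, Matrix.of m (σ i) i‖ := by
      rcases Int.units_eq_one_or (Equiv.Perm.sign σ) with h | h <;> simp [h]
    rw [h1, norm_prod]
    calc ∏ i, ‖Matrix.of m (σ i) i‖ ≤ ∏ i, ‖m (σ i)‖ := by
          refine Finset.prod_le_prod (fun i _ => norm_nonneg _) fun i _ => ?_
          exact norm_le_pi_norm (m (σ i)) i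
      _ = ∏ i, ‖m i‖ := Equiv.prod_comp σ fun a => ‖m a‖
  calc ∑ σ : Equiv.Perm (Fin n), ‖Equiv.Perm.sign σ • ∏ i, Matrix.of m (σ i) i‖
      ≤ ∑ _σ : Equiv.Perm (Fin n), ∏ i, ‖m i‖ := Finset.sum_le_sum fun σ _ => key σ
    _ = (n.factorial : ℝ) * ∏ i, ‖m i‖ := by
        rw [Finset.sum_const, Finset.card_univ, Fintype.card_perm]
        simp [nsmul_eq_mul]

lemma detCMM_apply (n : ℕ) (m : Fin n → Fin n → ℝ) :
    detCMM n m = (Matrix.of m).det := rfl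

lemma clm_apply_zero_pi {n : ℕ} {W : Type*} [NormedAddCommGroup W] [NormedSpace ℝ W]
    (L : (ℝ × (Fin n → ℝ)) →L[ℝ] W) (v : Fin n → ℝ) :
    L (0, v) = ∑ b, v b • L (0, Pi.single b 1) := by
  have hv : ((0 : ℝ), v) = ∑ b, v b • ((0 : ℝ), (Pi.single b 1 : Fin n → ℝ)) := by
    rw [Prod.ext_iff]
    constructor
    · rw [Prod.fst_sum]; simp
    · rw [Prod.snd_sum]
      funext j
      simp [Pi.single_apply, Finset.sum_apply, Finset.sum_ite_eq]
  rw [hv, map_sum]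
  refine Finset.sum_congr rfl fun b _ => ?_
  exact map_smul L (v b) _

/-- **Continuity equation**: in the continuum setup, if moreover each `φ(t,·)` is a C¹
diffeomorphism of `ℝⁿ`, `ρ` is C¹ and the mass relation
`ρ₀(X) = ρ(t, φ(t,X)) · det F(t,X)` holds, then
`∂ρ/∂t + div_x(ρ u) = 0` everywhere. -/
theorem continuity_equation
    (n : ℕ) (hn : 1 ≤ n)
    (φ : ℝ × (Fin n → ℝ) → (Fin n → ℝ)) (hφ : ContDiff ℝ 2 φ)
    (u : ℝ × (Fin n → ℝ) → (Fin n → ℝ)) (hu : ContDiff ℝ 1 u)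
    (hflow : ∀ (t : ℝ) (X : Fin n → ℝ), fderiv ℝ φ (t, X) (1, 0) = u (t, φ (t, X)))
    (F : ℝ → (Fin n → ℝ) → Matrix (Fin n) (Fin n) ℝ)
    (hF : ∀ t X a i, F t X a i = fderiv ℝ φ (t, X) (0, Pi.single i 1) a)
    (hdiffeo : ∀ t : ℝ, ∃ e : (Fin n → ℝ) ≃ (Fin n → ℝ),
      (∀ X, e X = φ (t, X)) ∧ ContDiff ℝ 1 (e.symm : (Fin n → ℝ) → (Fin n → ℝ)))
    (ρ : ℝ × (Fin n → ℝ) → ℝ) (hρ : ContDiff ℝ 1 ρ)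
    (ρ₀ : (Fin n → ℝ) → ℝ)
    (hmass : ∀ (t : ℝ) (X : Fin n → ℝ), ρ₀ X = ρ (t, φ (t, X)) * (F t X).det) :
    ∀ (t : ℝ) (x : Fin n → ℝ),
      fderiv ℝ ρ (t, x) (1, 0)
        + ∑ a : Fin n,
            fderiv ℝ (fun y : ℝ × (Fin n → ℝ) => ρ y * u y a) (t, x) (0, Pi.single a 1)
        = 0 := by
  classical
  intro t₀ x₀
  obtain ⟨e, he, hesymm⟩ := hdiffeo t₀
  set X₀ : Fin n → ℝ := e.symm x₀ with hX0def
  have hφX : φ (t₀, X₀) = x₀ := by rw [← he]; exact e.apply_symm_apply x₀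
  have hφ1 : ContDiff ℝ 1 φ := hφ.of_le one_le_two
  have hφd : Differentiable ℝ φ := hφ1.differentiable one_ne_zero
  have hud : Differentiable ℝ u := hu.differentiable one_ne_zero
  have hρd : Differentiable ℝ ρ := hρ.differentiable one_ne_zero
  have hφ'c : ContDiff ℝ 1 (fderiv ℝ φ) := hφ.fderiv_right (by norm_num)
  have hφ'd : Differentiable ℝ (fderiv ℝ φ) := hφ'c.differentiable one_ne_zero
  set B : (ℝ × (Fin n → ℝ)) →L[ℝ] ((ℝ × (Fin n → ℝ)) →L[ℝ] (Fin n → ℝ)) :=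
    fderiv ℝ (fderiv ℝ φ) (t₀, X₀) with hBdef
  set M : ℝ → (Fin n → Fin n → ℝ) :=
    fun t a i => fderiv ℝ φ (t, X₀) (0, Pi.single i 1) a with hMdef
  set G : Fin n → Fin n → ℝ :=
    fun a b => fderiv ℝ u (t₀, x₀) (0, Pi.single b 1) a with hGdef
  -- the straight line t ↦ (t, X₀)
  have hline : HasDerivAt (fun s : ℝ => ((s, X₀) : ℝ × (Fin n → ℝ)))
      ((1 : ℝ), (0 : Fin n → ℝ)) t₀ :=
    (hasDerivAt_id t₀).prodMk (hasDerivAt_const t₀ X₀)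
  -- derivative of t ↦ fderiv φ (t, X₀)
  have hB' : HasDerivAt (fun t => fderiv ℝ φ (t, X₀)) (B (1, 0)) t₀ :=
    (hφ'd (t₀, X₀)).hasFDerivAt.comp_hasDerivAt t₀ hline
  set M' : Fin n → Fin n → ℝ := fun a i => B (1, 0) (0, Pi.single i 1) a with hM'def
  have hMd : HasDerivAt M M' t₀ := by
    refine hasDerivAt_pi.2 fun a => hasDerivAt_pi.2 fun i => ?_
    have h1 : HasDerivAt (fun t => fderiv ℝ φ (t, X₀) (0, Pi.single i 1))
        (B (1, 0) (0, Pi.single i 1)) t₀ := by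
      have h2 := (ContinuousLinearMap.apply ℝ (Fin n → ℝ)
        (((0 : ℝ), (Pi.single i 1 : Fin n → ℝ)))).hasFDerivAt.comp_hasDerivAt t₀ hB'
      exact h2
    exact hasDerivAt_pi.1 h1 a
  -- determinant along the flow
  set f := detCMM n with hfdef
  have hdet : HasDerivAt (fun t => f (M t)) ((f.linearDeriv (M t₀)) M') t₀ :=
    (f.hasFDerivAt (x := M t₀)).comp_hasDerivAt t₀ hMd
  -- derivative of t ↦ ρ (t, φ (t, X₀))
  have hcφ : HasDerivAt (fun t => φ (t, X₀)) (u (t₀, x₀)) t₀ := by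
    have h := (hφd (t₀, X₀)).hasFDerivAt.comp_hasDerivAt t₀ hline
    have h3 : fderiv ℝ φ (t₀, X₀) (1, 0) = u (t₀, x₀) := by rw [hflow t₀ X₀, hφX]
    rwa [h3] at h
  have hc : HasDerivAt (fun t => ((t, φ (t, X₀)) : ℝ × (Fin n → ℝ)))
      ((1 : ℝ), u (t₀, x₀)) t₀ := (hasDerivAt_id t₀).prodMk hcφ
  have hρc : HasDerivAt (fun t => ρ (t, φ (t, X₀)))
      (fderiv ℝ ρ (t₀, x₀) (1, u (t₀, x₀))) t₀ := by
    exact (hρd (t₀, x₀)).hasFDerivAt.comp_hasDerivAt_of_eq t₀ hc (by rw [hφX])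
  -- mass conservation: the product is constant in t
  have hmul : HasDerivAt (fun t => ρ (t, φ (t, X₀)) * f (M t)) _ t₀ := hρc.mul hdet
  have hfn : (fun t => ρ (t, φ (t, X₀)) * f (M t)) = fun _ => ρ₀ X₀ := by
    funext t
    have hMF : Matrix.of (M t) = F t X₀ := by
      ext a i
      rw [Matrix.of_apply]
      exact (hF t X₀ a i).symm
    rw [hfdef, detCMM_apply, hMF]
    exact (hmass t X₀).symm
  rw [hfn] at hmul
  have hkey : fderiv ℝ ρ (t₀, x₀) (1, u (t₀, x₀)) * f (M t₀)
      + ρ (t₀, φ (t₀, X₀)) * (f.linearDeriv (M t₀)) M' = 0 :=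
    hmul.unique (hasDerivAt_const t₀ (ρ₀ X₀))
  -- symmetry of the second derivative and the structure of M'
  have hsym : IsSymmSndFDerivAt ℝ φ (t₀, X₀) :=
    hφ.contDiffAt.isSymmSndFDerivAt (by norm_num)
  -- A ∘ B is the derivative of p ↦ fderiv φ p (1,0) = u (p.1, φ p)
  set A : ((ℝ × (Fin n → ℝ)) →L[ℝ] (Fin n → ℝ)) →L[ℝ] (Fin n → ℝ) :=
    ContinuousLinearMap.apply ℝ (Fin n → ℝ) (((1 : ℝ), (0 : Fin n → ℝ))) with hAdef
  have hAt : HasFDerivAt (fun p => fderiv ℝ φ p (1, 0)) (A.comp B) (t₀, X₀) :=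
    A.hasFDerivAt.comp (t₀, X₀) (hφ'd (t₀, X₀)).hasFDerivAt
  have hfun : (fun p : ℝ × (Fin n → ℝ) => fderiv ℝ φ p (1, 0))
      = fun p => u (p.1, φ p) := by
    funext p
    have h := hflow p.1 p.2
    rwa [Prod.mk.eta] at h
  set Ψ : (ℝ × (Fin n → ℝ)) →L[ℝ] (ℝ × (Fin n → ℝ)) :=
    (ContinuousLinearMap.fst ℝ ℝ (Fin n → ℝ)).prod (fderiv ℝ φ (t₀, X₀)) with hPsidef
  have hψ : HasFDerivAt (fun p : ℝ × (Fin n → ℝ) => ((p.1, φ p) : ℝ × (Fin n → ℝ)))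
      Ψ (t₀, X₀) := (hasFDerivAt_fst).prodMk (hφd (t₀, X₀)).hasFDerivAt
  have hw : HasFDerivAt (fun p : ℝ × (Fin n → ℝ) => u (p.1, φ p))
      ((fderiv ℝ u (t₀, x₀)).comp Ψ) (t₀, X₀) := by
    have h : HasFDerivAt u (fderiv ℝ u (t₀, x₀))
        (((t₀, X₀) : ℝ × (Fin n → ℝ)).1, φ (t₀, X₀)) := by
      rw [hφX]
      exact (hud (t₀, x₀)).hasFDerivAt
    exact h.comp (t₀, X₀) hψ
  have hEq : A.comp B = (fderiv ℝ u (t₀, x₀)).comp Ψ := by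
    rw [hfun] at hAt
    exact hAt.unique hw
  -- rows of M'
  have hM'row : ∀ a, M' a = ∑ b, G a b • M t₀ b := by
    intro a
    funext i
    have h1 : B (1, 0) (0, Pi.single i 1) = B (0, Pi.single i 1) (1, 0) := hsym.eq _ _
    have h2 : B (0, Pi.single i 1) (1, 0) = (A.comp B) (0, Pi.single i 1) := rfl
    have h3 : (A.comp B) (0, Pi.single i 1)
        = fderiv ℝ u (t₀, x₀) (0, fderiv ℝ φ (t₀, X₀) (0, Pi.single i 1)) := by
      rw [hEq]
      rfl
    have h4 : fderiv ℝ φ (t₀, X₀) ((0 : ℝ), (Pi.single i 1 : Fin n → ℝ))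
        = fun b => M t₀ b i := rfl
    have h5 : fderiv ℝ u (t₀, x₀) ((0 : ℝ), (fun b => M t₀ b i))
        = ∑ b, M t₀ b i • fderiv ℝ u (t₀, x₀) (0, Pi.single b 1) := by
      have := clm_apply_zero_pi (fderiv ℝ u (t₀, x₀)) (fun b => M t₀ b i)
      simpa using this
    have : M' a i = (∑ b, M t₀ b i • fderiv ℝ u (t₀, x₀) (0, Pi.single b 1)) a := by
      rw [hM'def]
      simp only []
      rw [h1, h2, h3, h4, h5]
    rw [this]
    simp only [Finset.sum_apply, Pi.smul_apply, smul_eq_mul]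
    exact Finset.sum_congr rfl fun b _ => mul_comm _ _
  -- Jacobi's formula
  have hsum : (f.linearDeriv (M t₀)) M' = (∑ a, G a a) * (Matrix.of (M t₀)).det := by
    rw [ContinuousMultilinearMap.linearDeriv_apply, Finset.sum_mul]
    refine Finset.sum_congr rfl fun a _ => ?_
    rw [hM'row a]
    have hupd : f (Function.update (M t₀) a (∑ b, G a b • M t₀ b))
        = ((Matrix.of (M t₀)).updateRow a (∑ b, G a b • Matrix.of (M t₀) b)).det := rfl
    rw [hupd, Matrix.det_updateRow_sum]
    simp
  -- det is nonzero
  have hesd : Differentiable ℝ (e.symm : (Fin n → ℝ) → (Fin n → ℝ)) :=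
    hesymm.differentiable one_ne_zero
  have hid : (fun x => φ (t₀, e.symm x)) = (id : (Fin n → ℝ) → (Fin n → ℝ)) :=
    funext fun x => by rw [← he]; exact e.apply_symm_apply x
  set S : (Fin n → ℝ) →L[ℝ] (Fin n → ℝ) :=
    fderiv ℝ (e.symm : (Fin n → ℝ) → (Fin n → ℝ)) x₀ with hSdef
  have hinner : HasFDerivAt (fun x : Fin n → ℝ => ((t₀, e.symm x) : ℝ × (Fin n → ℝ)))
      ((0 : (Fin n → ℝ) →L[ℝ] ℝ).prod S) x₀ :=
    (hasFDerivAt_const t₀ x₀).prodMk (hesd x₀).hasFDerivAt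
  have hcomp : HasFDerivAt (fun x => φ (t₀, e.symm x))
      ((fderiv ℝ φ (t₀, X₀)).comp ((0 : (Fin n → ℝ) →L[ℝ] ℝ).prod S)) x₀ :=
    (hφd (t₀, X₀)).hasFDerivAt.comp x₀ hinner
  rw [hid] at hcomp
  have hone : (fderiv ℝ φ (t₀, X₀)).comp ((0 : (Fin n → ℝ) →L[ℝ] ℝ).prod S)
      = ContinuousLinearMap.id ℝ (Fin n → ℝ) := hcomp.unique (hasFDerivAt_id x₀)
  have happ : ∀ v, fderiv ℝ φ (t₀, X₀) ((0 : ℝ), S v) = v := by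
    intro v
    have h := ContinuousLinearMap.ext_iff.1 hone v
    simpa using h
  set Lrow : (Fin n → ℝ) →ₗ[ℝ] (Fin n → ℝ) :=
    { toFun := fun w => fderiv ℝ φ (t₀, X₀) ((0 : ℝ), w)
      map_add' := fun w₁ w₂ => by
        show fderiv ℝ φ (t₀, X₀) ((0 : ℝ), w₁ + w₂)
          = fderiv ℝ φ (t₀, X₀) ((0 : ℝ), w₁) + fderiv ℝ φ (t₀, X₀) ((0 : ℝ), w₂)
        rw [show ((0 : ℝ), w₁ + w₂) = ((0 : ℝ), w₁) + ((0 : ℝ), w₂) by simp, map_add]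
      map_smul' := fun c w => by
        show fderiv ℝ φ (t₀, X₀) ((0 : ℝ), c • w) = c • fderiv ℝ φ (t₀, X₀) ((0 : ℝ), w)
        rw [show ((0 : ℝ), c • w) = c • ((0 : ℝ), w) by simp, map_smul] } with hLrowdef
  have hLS : Lrow ∘ₗ (S : (Fin n → ℝ) →ₗ[ℝ] (Fin n → ℝ)) = LinearMap.id :=
    LinearMap.ext fun v => happ v
  have hdetmul : (LinearMap.toMatrix' Lrow).det
      * (LinearMap.toMatrix' (S : (Fin n → ℝ) →ₗ[ℝ] (Fin n → ℝ))).det = 1 := by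
    rw [← Matrix.det_mul, ← LinearMap.toMatrix'_comp, hLS, LinearMap.toMatrix'_id,
      Matrix.det_one]
  have hLrowM : LinearMap.toMatrix' Lrow = Matrix.of (M t₀) := by
    ext a i
    rw [LinearMap.toMatrix'_apply]
    have hsingle : (fun j' => if j' = i then (1 : ℝ) else 0) = Pi.single i 1 := by
      funext j'
      simp [Pi.single_apply]
    show Lrow (Pi.single i 1) a = M t₀ a i
    rfl
  have hdet0 : (Matrix.of (M t₀)).det ≠ 0 := by
    intro h
    rw [hLrowM, h, zero_mul] at hdetmul
    exact zero_ne_one hdetmul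
  -- combine: transport equation
  have hfM : f (M t₀) = (Matrix.of (M t₀)).det := detCMM_apply n (M t₀)
  rw [hφX, hsum, hfM] at hkey
  have hfactor : (fderiv ℝ ρ (t₀, x₀) (1, u (t₀, x₀))
      + ρ (t₀, x₀) * ∑ a, G a a) * (Matrix.of (M t₀)).det = 0 := by
    rw [add_mul, mul_assoc]
    exact hkey
  have hkey2 : fderiv ℝ ρ (t₀, x₀) (1, u (t₀, x₀)) + ρ (t₀, x₀) * ∑ a, G a a = 0 :=
    by rcases mul_eq_zero.1 hfactor with h | h
       · exact h
       · exact absurd h hdet0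
  -- expand the goal
  have hua : ∀ a : Fin n, HasFDerivAt (fun y : ℝ × (Fin n → ℝ) => u y a)
      ((ContinuousLinearMap.proj a).comp (fderiv ℝ u (t₀, x₀))) (t₀, x₀) := by
    intro a
    have h := (ContinuousLinearMap.proj (R := ℝ) (φ := fun _ : Fin n => ℝ)
      a).hasFDerivAt.comp (t₀, x₀) (hud (t₀, x₀)).hasFDerivAt
    exact h
  have hprod : ∀ a : Fin n,
      fderiv ℝ (fun y : ℝ × (Fin n → ℝ) => ρ y * u y a) (t₀, x₀) (0, Pi.single a 1)
      = u (t₀, x₀) a * fderiv ℝ ρ (t₀, x₀) (0, Pi.single a 1)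
        + ρ (t₀, x₀) * G a a := by
    intro a
    have h : fderiv ℝ (fun y : ℝ × (Fin n → ℝ) => ρ y * u y a) (t₀, x₀) = _ :=
      ((hρd (t₀, x₀)).hasFDerivAt.mul (hua a)).fderiv
    rw [h]
    simp only [hGdef, ContinuousLinearMap.add_apply, ContinuousLinearMap.smul_apply,
      ContinuousLinearMap.coe_comp', Function.comp_apply, ContinuousLinearMap.proj_apply,
      smul_eq_mul]
    ring
  have hsplit : fderiv ℝ ρ (t₀, x₀) (1, u (t₀, x₀))
      = fderiv ℝ ρ (t₀, x₀) (1, 0)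
        + ∑ a, u (t₀, x₀) a * fderiv ℝ ρ (t₀, x₀) (0, Pi.single a 1) := by
    have h0 : ((1 : ℝ), u (t₀, x₀)) = ((1 : ℝ), (0 : Fin n → ℝ)) + (0, u (t₀, x₀)) := by
      simp
    rw [h0, map_add]
    congr 1
    have := clm_apply_zero_pi (fderiv ℝ ρ (t₀, x₀)) (u (t₀, x₀))
    simpa [smul_eq_mul] using this
  calc fderiv ℝ ρ (t₀, x₀) (1, 0)
        + ∑ a, fderiv ℝ (fun y : ℝ × (Fin n → ℝ) => ρ y * u y a) (t₀, x₀) (0, Pi.single a 1)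
      = fderiv ℝ ρ (t₀, x₀) (1, 0)
        + (∑ a, u (t₀, x₀) a * fderiv ℝ ρ (t₀, x₀) (0, Pi.single a 1)
          + ∑ a, ρ (t₀, x₀) * G a a) := by
        rw [Finset.sum_congr rfl fun a _ => hprod a, Finset.sum_add_distrib]
    _ = fderiv ℝ ρ (t₀, x₀) (1, u (t₀, x₀)) + ρ (t₀, x₀) * ∑ a, G a a := by
        rw [hsplit, Finset.mul_sum]
        ring
    _ = 0 := hkey2
end

section
/- Discrete Hamilton principle ⟺ discrete Euler–Lagrange equations (2D): for any discrete field φ and any node (j,a,b) with 0 < j < N, the gradient of the discrete action S with respect to the variable φ^j_{a,b} equals Σ_{(□,p) : (j,a,b) incident to □ in slot p} D_pL(j¹φ(□)). Consequently, φ is a critical point of S with respect to all variations of the node values vanishing at the temporal levels j = 0 and j = N if and only if the discrete Euler–Lagrange node equation holds at every node (j,a,b) with 0 < j < N; in particular, at an interior node (0 < j < N, 0 < a < A, 0 < b < B) this equation reads D₂L(j¹φ(□^{j−1}_{a,b})) + D₄L(j¹φ(□^{j−1}_{a−1,b})) + D₆L(j¹φ(□^{j−1}_{a,b−1})) + D₈L(j¹φ(□^{j−1}_{a−1,b−1}))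 + D₁L(j¹φ(□^j_{a,b})) + D₃L(j¹φ(□^j_{a−1,b})) + D₅L(j¹φ(□^j_{a,b−1})) + D₇L(j¹φ(□^j_{a−1,b−1})) = 0, while at spatial-boundary nodes only the existing incident cells contribute (the discrete natural boundary conditions). -/
open InnerProductSpace

noncomputable section

/-- The plane `ℝ²` as a Euclidean space. -/
abbrev E2 : Type := EuclideanSpace ℝ (Fin 2)

/-- Partial gradient `D_pL ∈ ℝ²` of a cell Lagrangian `L` in its `p`-th slot. -/
noncomputable def pgrad {k : ℕ} (L : (Fin k → E2) → ℝ) (x : Fin k → E2) (p : Fin k) : E2 :=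
  gradient (fun y => L (Function.update x p y)) (x p)

/-- The node of the cell `□^j_{a,b}` occupied by slot `s` (slots `0,…,7` correspond to
the paper's slots `1,…,8`): slot `s` sits at time `j + s % 2` and spatial node
`(a + (s/2) % 2, b + s/4)`. -/
def cellNode (j a b : ℕ) (s : Fin 8) : ℕ × ℕ × ℕ :=
  (j + s.val % 2, a + (s.val / 2) % 2, b + s.val / 4)

/-- First jet of the discrete field on the cell `□^j_{a,b}`: the 8-tuple
`(φ^j_{a,b}, φ^{j+1}_{a,b}, φ^j_{a+1,b}, φ^{j+1}_{a+1,b}, φ^j_{a,b+1}, φ^{j+1}_{a,b+1},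
φ^j_{a+1,b+1}, φ^{j+1}_{a+1,b+1})`. -/
def jet (φ : ℕ → ℕ → ℕ → E2) (j a b : ℕ) : Fin 8 → E2 :=
  fun s => φ (j + s.val % 2) (a + (s.val / 2) % 2) (b + s.val / 4)

/-- Sum of `D_pL(j¹φ(□))` over all pairs `(□, p)` such that the given node is incident
to the cell `□` in slot `p`; the discrete Euler–Lagrange node equation asserts this
vanishes. -/
noncomputable def delSum (N A B : ℕ) (L : (Fin 8 → E2) → ℝ) (φ : ℕ → ℕ → ℕ → E2)
    (nd : ℕ × ℕ × ℕ) : E2 :=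
  ∑ j' ∈ Finset.range N, ∑ a' ∈ Finset.range A, ∑ b' ∈ Finset.range B, ∑ s : Fin 8,
    if cellNode j' a' b' s = nd then pgrad L (jet φ j' a' b') s else 0

/-- The discrete action functional `S(φ) = Σ_cells L(j¹φ(□))`. -/
noncomputable def action (N A B : ℕ) (L : (Fin 8 → E2) → ℝ) (φ : ℕ → ℕ → ℕ → E2) : ℝ :=
  ∑ j ∈ Finset.range N, ∑ a ∈ Finset.range A, ∑ b ∈ Finset.range B, L (jet φ j a b)

/-- The field obtained from `φ` by replacing its value at one node by `y`. -/
def updNode (φ : ℕ → ℕ → ℕ → E2) (nd : ℕ × ℕ × ℕ) (y : E2) : ℕ → ℕ → ℕ → E2 :=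
  fun j a b => if (j, a, b) = nd then y else φ j a b

/-! ### Auxiliary lemmas -/

lemma cellNode_inj (j a b : ℕ) : Function.Injective (cellNode j a b) := by
  intro s t h
  simp only [cellNode, Prod.mk.injEq] at h
  have hs := s.isLt; have ht := t.isLt
  exact Fin.ext (by omega)

lemma jet_updNode (φ : ℕ → ℕ → ℕ → E2) (nd : ℕ × ℕ × ℕ) (y : E2) (j' a' b' : ℕ) :
    jet (updNode φ nd y) j' a' b'
      = fun s => if cellNode j' a' b' s = nd then y else jet φ j' a' b' s := rfl

lemma hasGradientAt_update' (L : (Fin 8 → E2) → ℝ) (hL : Differentiable ℝ L)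
    (x : Fin 8 → E2) (p : Fin 8) :
    HasGradientAt (fun y => L (Function.update x p y)) (pgrad L x p) (x p) := by
  have hd : DifferentiableAt ℝ (fun y => L (Function.update x p y)) (x p) :=
    (hL _).comp _ (hasFDerivAt_update (i := p) x (x p)).differentiableAt
  exact hd.hasGradientAt

lemma inner_pgrad (L : (Fin 8 → E2) → ℝ) (hL : Differentiable ℝ L)
    (x : Fin 8 → E2) (p : Fin 8) (w : E2) :
    (inner ℝ (pgrad L x p) w : ℝ) = fderiv ℝ L x (Pi.single p w) := by
  have h2 : HasFDerivAt (fun y => L (Function.update x p y))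
      (toDual ℝ E2 (pgrad L x p)) (x p) :=
    hasGradientAt_iff_hasFDerivAt.mp (hasGradientAt_update' L hL x p)
  have h1 : HasFDerivAt (fun y => L (Function.update x p y))
      ((fderiv ℝ L x).comp
        (ContinuousLinearMap.pi (Pi.single p (ContinuousLinearMap.id ℝ E2)))) (x p) := by
    have hu := hasFDerivAt_update (𝕜 := ℝ) (i := p) x (x p)
    have hc := ((hL (Function.update x p (x p))).hasFDerivAt).comp (x p) hu
    rwa [Function.update_eq_self] at hc
  have heq := h1.unique h2
  have happ := congrArg (fun T => T w) heq
  simp only [ContinuousLinearMap.comp_apply, toDual_apply_apply] at happ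
  rw [← happ]
  congr 1
  funext i
  simp [ContinuousLinearMap.pi_apply, Pi.single_apply]
  split <;> simp

lemma fderiv_eq_sum_inner (L : (Fin 8 → E2) → ℝ) (hL : Differentiable ℝ L)
    (x v : Fin 8 → E2) :
    fderiv ℝ L x v = ∑ s : Fin 8, (inner ℝ (pgrad L x s) (v s) : ℝ) := by
  conv_lhs => rw [← Finset.univ_sum_single v, map_sum]
  exact Finset.sum_congr rfl fun s _ => (inner_pgrad L hL x s (v s)).symm

lemma hasDerivAt_line (L : (Fin 8 → E2) → ℝ) (hL : Differentiable ℝ L) (x v : Fin 8 → E2) :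
    HasDerivAt (fun ε : ℝ => L (x + ε • v)) (fderiv ℝ L x v) 0 := by
  have h1 : HasDerivAt (fun ε : ℝ => x + ε • v) v 0 := by
    simpa using ((hasDerivAt_id (0:ℝ)).smul_const v).const_add x
  have := (hL (x + (0:ℝ) • v)).hasFDerivAt.comp_hasDerivAt 0 h1
  simp only [zero_smul, add_zero] at this
  exact this

lemma hasGradientAt_finset_sum {ι : Type*} (t : Finset ι) (f : ι → E2 → ℝ) (g : ι → E2) (x : E2)
    (h : ∀ i ∈ t, HasGradientAt (f i) (g i) x) :
    HasGradientAt (fun y => ∑ i ∈ t, f i y) (∑ i ∈ t, g i) x := by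
  rw [hasGradientAt_iff_hasFDerivAt, map_sum]
  exact HasFDerivAt.fun_sum fun i hi => hasGradientAt_iff_hasFDerivAt.mp (h i hi)

lemma cell_hasGradient (L : (Fin 8 → E2) → ℝ) (hL : Differentiable ℝ L)
    (φ : ℕ → ℕ → ℕ → E2) (nd : ℕ × ℕ × ℕ) (j' a' b' : ℕ) :
    HasGradientAt (fun y => L (jet (updNode φ nd y) j' a' b'))
      (∑ s : Fin 8, if cellNode j' a' b' s = nd then pgrad L (jet φ j' a' b') s else 0)
      (φ nd.1 nd.2.1 nd.2.2) := by
  by_cases h : ∃ s, cellNode j' a' b' s = nd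
  · obtain ⟨s₀, hs₀⟩ := h
    have uniq : ∀ s : Fin 8, (cellNode j' a' b' s = nd) ↔ s = s₀ := by
      intro s
      constructor
      · intro hs; exact cellNode_inj j' a' b' (hs.trans hs₀.symm)
      · rintro rfl; exact hs₀
    have hfun : (fun y => L (jet (updNode φ nd y) j' a' b'))
        = fun y => L (Function.update (jet φ j' a' b') s₀ y) := by
      funext y
      congr 1
      funext s
      rw [jet_updNode]
      simp only [Function.update_apply, uniq s]
    have hsum : (∑ s : Fin 8, if cellNode j' a' b' s = nd then pgrad L (jet φ j' a' b') s else 0)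
        = pgrad L (jet φ j' a' b') s₀ := by
      rw [Finset.sum_eq_single s₀]
      · rw [if_pos hs₀]
      · intro s _ hs; rw [if_neg]; rw [uniq s]; exact hs
      · intro hs; exact absurd (Finset.mem_univ s₀) hs
    have hpt : φ nd.1 nd.2.1 nd.2.2 = (jet φ j' a' b') s₀ := by
      rw [← hs₀]; rfl
    rw [hfun, hsum, hpt]
    exact hasGradientAt_update' L hL (jet φ j' a' b') s₀
  · push_neg at h
    have hfun : (fun y => L (jet (updNode φ nd y) j' a' b'))
        = fun _ => L (jet φ j' a' b') := by
      funext y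
      congr 1
      funext s
      rw [jet_updNode]
      exact if_neg (h s)
    have hsum : (∑ s : Fin 8, if cellNode j' a' b' s = nd then pgrad L (jet φ j' a' b') s else 0)
        = 0 := Finset.sum_eq_zero fun s _ => if_neg (h s)
    rw [hfun, hsum]
    exact hasGradientAt_const _ _

lemma grad_action (N A B : ℕ) (L : (Fin 8 → E2) → ℝ) (hL : Differentiable ℝ L)
    (φ : ℕ → ℕ → ℕ → E2) (j a b : ℕ) :
    gradient (fun y => action N A B L (updNode φ (j, a, b) y)) (φ j a b)
      = delSum N A B L φ (j, a, b) := by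
  have h : HasGradientAt (fun y => action N A B L (updNode φ (j, a, b) y))
      (delSum N A B L φ (j, a, b)) (φ j a b) := by
    refine hasGradientAt_finset_sum _ _ _ _ fun j' _ =>
      hasGradientAt_finset_sum _ _ _ _ fun a' _ =>
        hasGradientAt_finset_sum _ _ _ _ fun b' _ => ?_
    exact cell_hasGradient L hL φ (j, a, b) j' a' b'
  exact h.gradient

/-! ### Sum rearrangement lemmas -/

lemma sum_s_out {M : Type*} [AddCommMonoid M] (n1 n2 n3 : ℕ) (f : ℕ → ℕ → ℕ → Fin 8 → M) :
    (∑ x ∈ Finset.range n1, ∑ y ∈ Finset.range n2, ∑ z ∈ Finset.range n3, ∑ s : Fin 8, f x y z s)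
    = ∑ s : Fin 8, ∑ x ∈ Finset.range n1, ∑ y ∈ Finset.range n2, ∑ z ∈ Finset.range n3,
        f x y z s :=
  calc
    _ = ∑ x ∈ Finset.range n1, ∑ y ∈ Finset.range n2, ∑ s : Fin 8, ∑ z ∈ Finset.range n3,
          f x y z s :=
      Finset.sum_congr rfl fun _ _ => Finset.sum_congr rfl fun _ _ => Finset.sum_comm
    _ = ∑ x ∈ Finset.range n1, ∑ s : Fin 8, ∑ y ∈ Finset.range n2, ∑ z ∈ Finset.range n3,
          f x y z s :=
      Finset.sum_congr rfl fun _ _ => Finset.sum_comm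
    _ = _ := Finset.sum_comm

lemma sum_nd_out {M : Type*} [AddCommMonoid M] (n1 n2 n3 : ℕ) (T : Finset (ℕ × ℕ × ℕ))
    (f : ℕ → ℕ → ℕ → Fin 8 → (ℕ × ℕ × ℕ) → M) :
    (∑ x ∈ Finset.range n1, ∑ y ∈ Finset.range n2, ∑ z ∈ Finset.range n3, ∑ s : Fin 8,
        ∑ nd ∈ T, f x y z s nd)
    = ∑ nd ∈ T, ∑ x ∈ Finset.range n1, ∑ y ∈ Finset.range n2, ∑ z ∈ Finset.range n3,
        ∑ s : Fin 8, f x y z s nd :=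
  calc
    _ = ∑ x ∈ Finset.range n1, ∑ y ∈ Finset.range n2, ∑ z ∈ Finset.range n3,
          ∑ nd ∈ T, ∑ s : Fin 8, f x y z s nd :=
      Finset.sum_congr rfl fun _ _ => Finset.sum_congr rfl fun _ _ =>
        Finset.sum_congr rfl fun _ _ => Finset.sum_comm
    _ = ∑ x ∈ Finset.range n1, ∑ y ∈ Finset.range n2, ∑ nd ∈ T, ∑ z ∈ Finset.range n3,
          ∑ s : Fin 8, f x y z s nd :=
      Finset.sum_congr rfl fun _ _ => Finset.sum_congr rfl fun _ _ => Finset.sum_comm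
    _ = ∑ x ∈ Finset.range n1, ∑ nd ∈ T, ∑ y ∈ Finset.range n2, ∑ z ∈ Finset.range n3,
          ∑ s : Fin 8, f x y z s nd :=
      Finset.sum_congr rfl fun _ _ => Finset.sum_comm
    _ = _ := Finset.sum_comm

lemma triple_pick (N A B : ℕ) (X : ℕ → ℕ → ℕ → E2) (c1 c2 c3 j a b : ℕ)
    (h1 : c1 ≤ j) (h1' : j - c1 < N) (h2 : c2 ≤ a) (h2' : a - c2 < A)
    (h3 : c3 ≤ b) (h3' : b - c3 < B) :
    (∑ j' ∈ Finset.range N, ∑ a' ∈ Finset.range A, ∑ b' ∈ Finset.range B,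
      if ((j' + c1, a' + c2, b' + c3) : ℕ × ℕ × ℕ) = (j, a, b) then X j' a' b' else 0)
    = X (j - c1) (a - c2) (b - c3) := by
  have hz : ∀ j' a' b' : ℕ, (j' ≠ j - c1 ∨ a' ≠ a - c2 ∨ b' ≠ b - c3) →
      (if ((j' + c1, a' + c2, b' + c3) : ℕ × ℕ × ℕ) = (j, a, b) then X j' a' b' else 0) = 0 := by
    intro j' a' b' hd
    rw [if_neg]
    intro hP
    rw [Prod.mk.injEq, Prod.mk.injEq] at hP
    omega
  rw [Finset.sum_eq_single_of_mem (j - c1) (Finset.mem_range.mpr h1')]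
  · rw [Finset.sum_eq_single_of_mem (a - c2) (Finset.mem_range.mpr h2')]
    · rw [Finset.sum_eq_single_of_mem (b - c3) (Finset.mem_range.mpr h3')]
      · rw [if_pos]
        rw [Prod.mk.injEq, Prod.mk.injEq]
        omega
      · intro b' _ hb; exact hz _ _ _ (Or.inr (Or.inr hb))
    · intro a' _ ha; exact Finset.sum_eq_zero fun b' _ => hz _ _ _ (Or.inr (Or.inl ha))
  · intro j' _ hj
    exact Finset.sum_eq_zero fun a' _ => Finset.sum_eq_zero fun b' _ => hz _ _ _ (Or.inl hj)

lemma delSum_interior (N A B : ℕ) (L : (Fin 8 → E2) → ℝ) (φ : ℕ → ℕ → ℕ → E2)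
    (j a b : ℕ) (hj : 0 < j) (hjN : j < N) (ha : 0 < a) (haA : a < A)
    (hb : 0 < b) (hbB : b < B) :
    delSum N A B L φ (j, a, b)
      = pgrad L (jet φ (j-1) a b) 1 + pgrad L (jet φ (j-1) (a-1) b) 3
        + pgrad L (jet φ (j-1) a (b-1)) 5 + pgrad L (jet φ (j-1) (a-1) (b-1)) 7
        + pgrad L (jet φ j a b) 0 + pgrad L (jet φ j (a-1) b) 2
        + pgrad L (jet φ j a (b-1)) 4 + pgrad L (jet φ j (a-1) (b-1)) 6 := by
  unfold delSum
  rw [sum_s_out]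
  have e : ∀ s : Fin 8,
      (∑ j' ∈ Finset.range N, ∑ a' ∈ Finset.range A, ∑ b' ∈ Finset.range B,
        if cellNode j' a' b' s = (j, a, b) then pgrad L (jet φ j' a' b') s else 0)
      = pgrad L (jet φ (j - s.val % 2) (a - (s.val / 2) % 2) (b - s.val / 4)) s := by
    intro s
    have hs := s.isLt
    exact triple_pick N A B (fun j' a' b' => pgrad L (jet φ j' a' b') s) _ _ _ j a b
      (by omega) (by omega) (by omega) (by omega) (by omega) (by omega)
  rw [Finset.sum_congr rfl fun s _ => e s, Fin.sum_univ_eight]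
  simp only [show ((3:Fin 8):ℕ) = 3 from rfl, show ((4:Fin 8):ℕ) = 4 from rfl,
    show ((5:Fin 8):ℕ) = 5 from rfl, show ((6:Fin 8):ℕ) = 6 from rfl,
    show ((7:Fin 8):ℕ) = 7 from rfl]
  norm_num
  abel

/-! ### The variational derivative -/

lemma hasDerivAt_action (N A B : ℕ) (L : (Fin 8 → E2) → ℝ) (hL : Differentiable ℝ L)
    (φ δ : ℕ → ℕ → ℕ → E2) :
    HasDerivAt (fun ε : ℝ => action N A B L (fun j a b => φ j a b + ε • δ j a b))
      (∑ j' ∈ Finset.range N, ∑ a' ∈ Finset.range A, ∑ b' ∈ Finset.range B,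
        fderiv ℝ L (jet φ j' a' b') (jet δ j' a' b')) 0 := by
  refine HasDerivAt.fun_sum fun j' _ => HasDerivAt.fun_sum fun a' _ => HasDerivAt.fun_sum fun b' _ => ?_
  have hjet : ∀ ε : ℝ, jet (fun j a b => φ j a b + ε • δ j a b) j' a' b'
      = jet φ j' a' b' + ε • jet δ j' a' b' := fun ε => rfl
  have := hasDerivAt_line L hL (jet φ j' a' b') (jet δ j' a' b')
  simpa only [← hjet] using this

lemma inner_delSum (N A B : ℕ) (L : (Fin 8 → E2) → ℝ) (φ : ℕ → ℕ → ℕ → E2)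
    (nd : ℕ × ℕ × ℕ) (d : E2) :
    (inner ℝ (delSum N A B L φ nd) d : ℝ)
      = ∑ j' ∈ Finset.range N, ∑ a' ∈ Finset.range A, ∑ b' ∈ Finset.range B, ∑ s : Fin 8,
          if cellNode j' a' b' s = nd then (inner ℝ (pgrad L (jet φ j' a' b') s) d : ℝ) else 0 := by
  unfold delSum
  rw [sum_inner]
  refine Finset.sum_congr rfl fun j' _ => ?_
  rw [sum_inner]
  refine Finset.sum_congr rfl fun a' _ => ?_
  rw [sum_inner]
  refine Finset.sum_congr rfl fun b' _ => ?_
  rw [sum_inner]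
  refine Finset.sum_congr rfl fun s _ => ?_
  split <;> simp

/-- The node set. -/
def nodes (N A B : ℕ) : Finset (ℕ × ℕ × ℕ) :=
  Finset.range (N+1) ×ˢ Finset.range (A+1) ×ˢ Finset.range (B+1)

lemma cellNode_mem_nodes (N A B : ℕ) (j' a' b' : ℕ) (hj : j' < N) (ha : a' < A) (hb : b' < B)
    (s : Fin 8) : cellNode j' a' b' s ∈ nodes N A B := by
  have h1 : s.val % 2 ≤ 1 := Nat.le_of_lt_succ (Nat.mod_lt _ (by norm_num))
  have h2 : (s.val / 2) % 2 ≤ 1 := Nat.le_of_lt_succ (Nat.mod_lt _ (by norm_num))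
  have h3 : s.val / 4 ≤ 1 := by have := s.isLt; omega
  simp only [nodes, cellNode, Finset.mem_product, Finset.mem_range]
  exact ⟨by omega, by omega, by omega⟩

lemma deriv_action_eq (N A B : ℕ) (L : (Fin 8 → E2) → ℝ) (hL : Differentiable ℝ L)
    (φ δ : ℕ → ℕ → ℕ → E2) :
    deriv (fun ε : ℝ => action N A B L (fun j a b => φ j a b + ε • δ j a b)) 0
      = ∑ nd ∈ nodes N A B, (inner ℝ (delSum N A B L φ nd) (δ nd.1 nd.2.1 nd.2.2) : ℝ) := by
  rw [(hasDerivAt_action N A B L hL φ δ).deriv]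
  have step1 : ∀ j' a' b' : ℕ, j' < N → a' < A → b' < B →
      fderiv ℝ L (jet φ j' a' b') (jet δ j' a' b')
        = ∑ s : Fin 8, ∑ nd ∈ nodes N A B,
            if cellNode j' a' b' s = nd
            then (inner ℝ (pgrad L (jet φ j' a' b') s) (δ nd.1 nd.2.1 nd.2.2) : ℝ) else 0 := by
    intro j' a' b' hj ha hb
    rw [fderiv_eq_sum_inner L hL]
    refine Finset.sum_congr rfl fun s _ => ?_
    rw [Finset.sum_ite_eq (nodes N A B) (cellNode j' a' b' s)
      (fun nd => (inner ℝ (pgrad L (jet φ j' a' b') s) (δ nd.1 nd.2.1 nd.2.2) : ℝ)),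
      if_pos (cellNode_mem_nodes N A B j' a' b' hj ha hb s)]
    rfl
  rw [Finset.sum_congr rfl fun j' hj => Finset.sum_congr rfl fun a' ha =>
    Finset.sum_congr rfl fun b' hb => step1 j' a' b' (Finset.mem_range.mp hj)
      (Finset.mem_range.mp ha) (Finset.mem_range.mp hb)]
  rw [sum_nd_out]
  refine Finset.sum_congr rfl fun nd _ => ?_
  rw [inner_delSum]

/-! ### Main theorem -/

/-- **Discrete Hamilton principle ⟺ discrete Euler–Lagrange equations (2D)**:
(1) the gradient of the discrete action with respect to the node value `φ^j_{a,b}`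
(for `0 < j < N`) equals the sum of `D_pL` over the incident (cell, slot) pairs;
(2) `φ` is a critical point of the action for all variations vanishing at the temporal
levels `j = 0` and `j = N` iff the discrete Euler–Lagrange node equation holds at every
node with `0 < j < N`;
(3) at an interior node the node equation takes the explicit eight-term form. -/
theorem discrete_hamilton_principle_iff_discrete_EL
    (N A B : ℕ) (hN : 1 ≤ N) (hA : 1 ≤ A) (hB : 1 ≤ B)
    (L : (Fin 8 → E2) → ℝ) (hL : Differentiable ℝ L)
    (φ : ℕ → ℕ → ℕ → E2) :
    (∀ j a b : ℕ, 0 < j → j < N → a ≤ A → b ≤ B →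
      gradient (fun y => action N A B L (updNode φ (j, a, b) y)) (φ j a b)
        = delSum N A B L φ (j, a, b))
    ∧
    ((∀ δ : ℕ → ℕ → ℕ → E2, (∀ a b, δ 0 a b = 0) → (∀ a b, δ N a b = 0) →
        deriv (fun ε : ℝ => action N A B L (fun j a b => φ j a b + ε • δ j a b)) 0 = 0)
      ↔ (∀ j a b : ℕ, 0 < j → j < N → a ≤ A → b ≤ B →
          delSum N A B L φ (j, a, b) = 0))
    ∧
    (∀ j a b : ℕ, 0 < j → j < N → 0 < a → a < A → 0 < b → b < B →
      delSum N A B L φ (j, a, b)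
        = pgrad L (jet φ (j-1) a b) 1 + pgrad L (jet φ (j-1) (a-1) b) 3
          + pgrad L (jet φ (j-1) a (b-1)) 5 + pgrad L (jet φ (j-1) (a-1) (b-1)) 7
          + pgrad L (jet φ j a b) 0 + pgrad L (jet φ j (a-1) b) 2
          + pgrad L (jet φ j a (b-1)) 4 + pgrad L (jet φ j (a-1) (b-1)) 6) := by
  refine ⟨fun j a b _ _ _ _ => grad_action N A B L hL φ j a b, ⟨?_, ?_⟩, ?_⟩
  · -- Hamilton ⇒ EL
    intro H j a b hj hjN haA hbB
    have key : ∀ v : E2, (inner ℝ (delSum N A B L φ (j, a, b)) v : ℝ) = 0 := by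
      intro v
      set δ : ℕ → ℕ → ℕ → E2 := fun j1 a1 b1 => if ((j1, a1, b1) : ℕ × ℕ × ℕ) = (j, a, b) then v else 0 with hδ
      have h0 : ∀ a1 b1, δ 0 a1 b1 = 0 := by
        intro a1 b1
        show (if ((0, a1, b1) : ℕ × ℕ × ℕ) = (j, a, b) then v else 0) = 0
        rw [if_neg]; intro hP
        rw [Prod.mk.injEq, Prod.mk.injEq] at hP; omega
      have hNz : ∀ a1 b1, δ N a1 b1 = 0 := by
        intro a1 b1
        show (if ((N, a1, b1) : ℕ × ℕ × ℕ) = (j, a, b) then v else 0) = 0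
        rw [if_neg]; intro hP
        rw [Prod.mk.injEq, Prod.mk.injEq] at hP; omega
      have hd := H δ h0 hNz
      rw [deriv_action_eq N A B L hL φ δ] at hd
      have hrw : (∑ nd ∈ nodes N A B, (inner ℝ (delSum N A B L φ nd) (δ nd.1 nd.2.1 nd.2.2) : ℝ))
          = ∑ nd ∈ nodes N A B,
              if nd = (j, a, b) then (inner ℝ (delSum N A B L φ nd) v : ℝ) else 0 := by
        refine Finset.sum_congr rfl fun nd _ => ?_
        have hδnd : δ nd.1 nd.2.1 nd.2.2 = if nd = (j, a, b) then v else 0 := by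
          show (if ((nd.1, nd.2.1, nd.2.2) : ℕ × ℕ × ℕ) = (j, a, b) then v else 0) = _
          congr 1
        rw [hδnd]
        split <;> simp
      rw [hrw, Finset.sum_ite_eq' (nodes N A B) ((j, a, b) : ℕ × ℕ × ℕ)
        (fun nd => (inner ℝ (delSum N A B L φ nd) v : ℝ)), if_pos] at hd
      · exact hd
      · simp only [nodes, Finset.mem_product, Finset.mem_range]
        exact ⟨by omega, by omega, by omega⟩
    have := key (delSum N A B L φ (j, a, b))
    exact inner_self_eq_zero.mp this
  · -- EL ⇒ Hamilton
    intro hEL δ h0 hNz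
    rw [deriv_action_eq N A B L hL φ δ]
    refine Finset.sum_eq_zero fun nd hnd => ?_
    obtain ⟨j1, a1, b1⟩ := nd
    simp only [nodes, Finset.mem_product, Finset.mem_range] at hnd
    rcases Nat.eq_zero_or_pos j1 with hj0 | hjpos
    · subst hj0; rw [h0 a1 b1]; simp
    · rcases eq_or_lt_of_le (Nat.lt_succ_iff.mp hnd.1) with hjN | hjN
      · subst hjN; rw [hNz a1 b1]; simp
      · rw [hEL j1 a1 b1 hjpos hjN (Nat.lt_succ_iff.mp hnd.2.1) (Nat.lt_succ_iff.mp hnd.2.2)]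
        simp
  · intro j a b hj hjN ha haA hb hbB
    exact delSum_interior N A B L φ j a b hj hjN ha haA hb hbB

end
end

section
/- Discrete multisymplectic form formula (temporal-boundary form, 2D): assume L is twice continuously differentiable, let φ satisfy the discrete Euler–Lagrange node equations at every node with 0 < j < N, and let V and W be first variations along φ. Then Σ_{a=0}^{A−1} Σ_{b=0}^{B−1} [ Σ_{p ∈ {1,3,5,7}} ω_p(□⁰_{a,b})(V,W) + Σ_{p ∈ {2,4,6,8}} ω_p(□^{N−1}_{a,b})(V,W) ] = 0. -/
open scoped RealInnerProductSpace

noncomputable section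

/-- Second partial derivative `D_qD_pL(x)` applied to a slot-`q` variation `w ∈ ℝ²`,
producing the vector paired against slot `p`. -/
noncomputable def d2 (L : (Fin 8 → E2) → ℝ) (x : Fin 8 → E2) (p q : Fin 8) (w : E2) : E2 :=
  fderiv ℝ (fun y => pgrad L y p) x (Pi.single q w)

/-- `V` is a first variation along `φ`: the linearized discrete Euler–Lagrange node
equations hold at every node with `0 < j < N`. -/
def IsFirstVariation (N A B : ℕ) (L : (Fin 8 → E2) → ℝ)
    (φ V : ℕ → ℕ → ℕ → E2) : Prop :=
  ∀ j a b : ℕ, 0 < j → j < N → a ≤ A → b ≤ B →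
    (∑ j' ∈ Finset.range N, ∑ a' ∈ Finset.range A, ∑ b' ∈ Finset.range B, ∑ s : Fin 8,
      if cellNode j' a' b' s = (j, a, b) then
        ∑ q : Fin 8, d2 L (jet φ j' a' b') s q (jet V j' a' b' q)
      else 0) = 0

/-- The discrete Cartan 2-form contribution `ω_p(□^j_{a,b})(V,W)`. -/
noncomputable def omegaP (L : (Fin 8 → E2) → ℝ) (φ V W : ℕ → ℕ → ℕ → E2)
    (j a b : ℕ) (p : Fin 8) : ℝ :=
  ∑ q : Fin 8,
    (⟪d2 L (jet φ j a b) p q (jet W j a b q), jet V j a b p⟫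
      - ⟪d2 L (jet φ j a b) p q (jet V j a b q), jet W j a b p⟫)


def sCLM (p : Fin 8) : E2 →L[ℝ] (Fin 8 → E2) :=
  ContinuousLinearMap.pi (Pi.single p (ContinuousLinearMap.id ℝ E2))

lemma sCLM_apply (p : Fin 8) (v : E2) : sCLM p v = Pi.single p v := by
  ext i
  by_cases h : i = p <;> simp [sCLM, h, Pi.single_apply]

lemma pgrad_eq (L : (Fin 8 → E2) → ℝ) (hL : ContDiff ℝ 2 L) (y : Fin 8 → E2) (p : Fin 8) :
    pgrad L y p = (InnerProductSpace.toDual ℝ E2).symm ((fderiv ℝ L y).comp (sCLM p)) := by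
  have h2 : HasFDerivAt (Function.update y p) (sCLM p) (y p) :=
    hasFDerivAt_update (𝕜 := ℝ) y (y p)
  have hd : HasFDerivAt L (fderiv ℝ L y) (Function.update y p (y p)) := by
    rw [Function.update_eq_self]
    exact (hL.differentiable (by norm_num)).differentiableAt.hasFDerivAt
  have h1 : HasFDerivAt (fun z => L (Function.update y p z))
      ((fderiv ℝ L y).comp (sCLM p)) (y p) := hd.comp (y p) h2
  have h3 : HasGradientAt (fun z => L (Function.update y p z))
      ((InnerProductSpace.toDual ℝ E2).symm ((fderiv ℝ L y).comp (sCLM p))) (y p) := by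
    rw [hasGradientAt_iff_hasFDerivAt]
    simpa using h1
  exact h3.gradient

def Phi (p : Fin 8) : ((Fin 8 → E2) →L[ℝ] ℝ) →L[ℝ] E2 :=
  ((InnerProductSpace.toDual ℝ E2).symm.toContinuousLinearEquiv.toContinuousLinearMap).comp
    ((ContinuousLinearMap.compL ℝ E2 (Fin 8 → E2) ℝ).flip (sCLM p))

lemma Phi_apply (p : Fin 8) (ℓ : (Fin 8 → E2) →L[ℝ] ℝ) :
    Phi p ℓ = (InnerProductSpace.toDual ℝ E2).symm (ℓ.comp (sCLM p)) := rfl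

lemma inner_Phi (p : Fin 8) (ℓ : (Fin 8 → E2) →L[ℝ] ℝ) (v : E2) :
    ⟪Phi p ℓ, v⟫ = ℓ (Pi.single p v) := by
  rw [Phi_apply, InnerProductSpace.toDual_symm_apply]
  simp [sCLM_apply]

lemma d2_eq (L : (Fin 8 → E2) → ℝ) (hL : ContDiff ℝ 2 L) (x : Fin 8 → E2) (p q : Fin 8) (w : E2) :
    d2 L x p q w = Phi p (fderiv ℝ (fderiv ℝ L) x (Pi.single q w)) := by
  have hf : ContDiff ℝ 1 (fderiv ℝ L) := hL.fderiv_right (by norm_num)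
  have hfd : HasFDerivAt (fderiv ℝ L) (fderiv ℝ (fderiv ℝ L) x) x :=
    (hf.differentiable (by norm_num)).differentiableAt.hasFDerivAt
  have heq : (fun y => pgrad L y p) = fun y => Phi p (fderiv ℝ L y) := by
    funext y
    exact pgrad_eq L hL y p
  have hcomp : HasFDerivAt (fun y => pgrad L y p)
      ((Phi p).comp (fderiv ℝ (fderiv ℝ L) x)) x := by
    rw [heq]
    exact ((Phi p).hasFDerivAt (x := fderiv ℝ L x)).comp x hfd
  rw [d2, hcomp.fderiv]
  rfl

lemma d2_symm (L : (Fin 8 → E2) → ℝ) (hL : ContDiff ℝ 2 L) (x : Fin 8 → E2)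
    (p q : Fin 8) (v w : E2) :
    ⟪d2 L x p q w, v⟫ = ⟪d2 L x q p v, w⟫ := by
  have hsym : IsSymmSndFDerivAt ℝ L x :=
    hL.contDiffAt.isSymmSndFDerivAt (by norm_num)
  rw [d2_eq L hL, d2_eq L hL, inner_Phi, inner_Phi]
  exact hsym _ _

lemma omegaP_eq (L : (Fin 8 → E2) → ℝ) (φ V W : ℕ → ℕ → ℕ → E2) (j a b : ℕ) (p : Fin 8) :
    omegaP L φ V W j a b p =
      ⟪∑ q : Fin 8, d2 L (jet φ j a b) p q (jet W j a b q), jet V j a b p⟫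
        - ⟪∑ q : Fin 8, d2 L (jet φ j a b) p q (jet V j a b q), jet W j a b p⟫ := by
  rw [omegaP, Finset.sum_sub_distrib, sum_inner, sum_inner]

lemma cell_zero (L : (Fin 8 → E2) → ℝ) (hL : ContDiff ℝ 2 L) (φ V W : ℕ → ℕ → ℕ → E2)
    (j a b : ℕ) : ∑ p : Fin 8, omegaP L φ V W j a b p = 0 := by
  simp only [omegaP, Finset.sum_sub_distrib]
  rw [sub_eq_zero]
  rw [Finset.sum_comm]
  refine Finset.sum_congr rfl fun q _ => Finset.sum_congr rfl fun p _ => ?_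
  exact d2_symm L hL (jet φ j a b) p q (jet V j a b p) (jet W j a b q)

lemma interior_zero (N A B : ℕ) (L : (Fin 8 → E2) → ℝ)
    (φ V W : ℕ → ℕ → ℕ → E2)
    (hV : IsFirstVariation N A B L φ V) (hW : IsFirstVariation N A B L φ W) :
    ∑ j' ∈ Finset.range N, ∑ a' ∈ Finset.range A, ∑ b' ∈ Finset.range B, ∑ p : Fin 8,
      (if j' + p.val % 2 = 0 ∨ j' + p.val % 2 = N then 0 else omegaP L φ V W j' a' b' p) = 0 := by
  classical
  set S : Finset (ℕ × ℕ × ℕ) :=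
    Finset.Ico 1 N ×ˢ (Finset.range (A + 1) ×ˢ Finset.range (B + 1)) with hS
  have hpt : ∀ j' ∈ Finset.range N, ∀ a' ∈ Finset.range A, ∀ b' ∈ Finset.range B,
      ∀ p : Fin 8,
      (if j' + p.val % 2 = 0 ∨ j' + p.val % 2 = N then 0 else omegaP L φ V W j' a' b' p)
        = ∑ x ∈ S, (if cellNode j' a' b' p = x then omegaP L φ V W j' a' b' p else 0) := by
    intro j' hj' a' ha' b' hb' p
    rw [Finset.mem_range] at hj' ha' hb'
    have hmem : cellNode j' a' b' p ∈ S ↔ ¬(j' + p.val % 2 = 0 ∨ j' + p.val % 2 = N) := by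
      simp only [hS, cellNode, Finset.mem_product, Finset.mem_Ico, Finset.mem_range]
      have := p.isLt
      omega
    rw [Finset.sum_ite_eq, if_congr hmem rfl rfl, ite_not]
  calc
    ∑ j' ∈ Finset.range N, ∑ a' ∈ Finset.range A, ∑ b' ∈ Finset.range B, ∑ p : Fin 8,
        (if j' + p.val % 2 = 0 ∨ j' + p.val % 2 = N then 0 else omegaP L φ V W j' a' b' p)
      = ∑ j' ∈ Finset.range N, ∑ a' ∈ Finset.range A, ∑ b' ∈ Finset.range B, ∑ p : Fin 8,
        ∑ x ∈ S, (if cellNode j' a' b' p = x then omegaP L φ V W j' a' b' p else 0) := by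
        refine Finset.sum_congr rfl fun j' hj' => Finset.sum_congr rfl fun a' ha' =>
          Finset.sum_congr rfl fun b' hb' => Finset.sum_congr rfl fun p _ => ?_
        exact hpt j' hj' a' ha' b' hb' p
    _ = ∑ j' ∈ Finset.range N, ∑ a' ∈ Finset.range A, ∑ b' ∈ Finset.range B, ∑ x ∈ S,
        ∑ p : Fin 8, (if cellNode j' a' b' p = x then omegaP L φ V W j' a' b' p else 0) :=
        Finset.sum_congr rfl fun _ _ => Finset.sum_congr rfl fun _ _ =>
          Finset.sum_congr rfl fun _ _ => Finset.sum_comm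
    _ = ∑ j' ∈ Finset.range N, ∑ a' ∈ Finset.range A, ∑ x ∈ S, ∑ b' ∈ Finset.range B,
        ∑ p : Fin 8, (if cellNode j' a' b' p = x then omegaP L φ V W j' a' b' p else 0) :=
        Finset.sum_congr rfl fun _ _ => Finset.sum_congr rfl fun _ _ => Finset.sum_comm
    _ = ∑ j' ∈ Finset.range N, ∑ x ∈ S, ∑ a' ∈ Finset.range A, ∑ b' ∈ Finset.range B,
        ∑ p : Fin 8, (if cellNode j' a' b' p = x then omegaP L φ V W j' a' b' p else 0) :=
        Finset.sum_congr rfl fun _ _ => Finset.sum_comm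
    _ = ∑ x ∈ S, ∑ j' ∈ Finset.range N, ∑ a' ∈ Finset.range A, ∑ b' ∈ Finset.range B,
        ∑ p : Fin 8, (if cellNode j' a' b' p = x then omegaP L φ V W j' a' b' p else 0) :=
        Finset.sum_comm
    _ = 0 := by
        refine Finset.sum_eq_zero fun x hx => ?_
        obtain ⟨j, a, b⟩ := x
        rw [hS] at hx
        simp only [Finset.mem_product, Finset.mem_Ico, Finset.mem_range] at hx
        obtain ⟨⟨hj1, hj2⟩, ha, hb⟩ := hx
        have hterm : ∀ j' a' b' : ℕ, ∀ p : Fin 8,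
            (if cellNode j' a' b' p = (j, a, b) then omegaP L φ V W j' a' b' p else 0)
              = ⟪(if cellNode j' a' b' p = (j, a, b) then
                    ∑ q : Fin 8, d2 L (jet φ j' a' b') p q (jet W j' a' b' q) else 0), V j a b⟫
                - ⟪(if cellNode j' a' b' p = (j, a, b) then
                    ∑ q : Fin 8, d2 L (jet φ j' a' b') p q (jet V j' a' b' q) else 0), W j a b⟫ := by
          intro j' a' b' p
          split_ifs with h
          · rw [omegaP_eq]
            simp only [cellNode, Prod.mk.injEq] at h
            obtain ⟨h1, h2, h3⟩ := h
            simp only [jet]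
            rw [h1, h2, h3]
          · simp
        simp only [hterm]
        simp only [Finset.sum_sub_distrib, ← sum_inner]
        rw [hW j a b (by omega) (by omega) (by omega) (by omega),
          hV j a b (by omega) (by omega) (by omega) (by omega)]
        simp

lemma hsplit (N : ℕ) (L : (Fin 8 → E2) → ℝ) (φ V W : ℕ → ℕ → ℕ → E2)
    (j' a' b' : ℕ) (hj : j' < N) :
    ∑ p : Fin 8, omegaP L φ V W j' a' b' p
      = ((if j' = 0 then omegaP L φ V W j' a' b' 0 + omegaP L φ V W j' a' b' 2
            + omegaP L φ V W j' a' b' 4 + omegaP L φ V W j' a' b' 6 else 0)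
        + (if j' = N - 1 then omegaP L φ V W j' a' b' 1 + omegaP L φ V W j' a' b' 3
            + omegaP L φ V W j' a' b' 5 + omegaP L φ V W j' a' b' 7 else 0))
        + ∑ p : Fin 8,
            (if j' + p.val % 2 = 0 ∨ j' + p.val % 2 = N then 0 else omegaP L φ V W j' a' b' p) := by
  have he : (j' + 0 % 2 = 0 ∨ j' + 0 % 2 = N) ↔ j' = 0 := by omega
  have ho : (j' + 1 % 2 = 0 ∨ j' + 1 % 2 = N) ↔ j' = N - 1 := by omega
  rw [Fin.sum_univ_eight, Fin.sum_univ_eight]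
  have v0 : ((0 : Fin 8)).val = 0 := rfl
  have v1 : ((1 : Fin 8)).val = 1 := rfl
  have v2 : ((2 : Fin 8)).val = 2 := rfl
  have v3 : ((3 : Fin 8)).val = 3 := rfl
  have v4 : ((4 : Fin 8)).val = 4 := rfl
  have v5 : ((5 : Fin 8)).val = 5 := rfl
  have v6 : ((6 : Fin 8)).val = 6 := rfl
  have v7 : ((7 : Fin 8)).val = 7 := rfl
  simp only [v0, v1, v2, v3, v4, v5, v6, v7]
  have m0 : (0 : ℕ) % 2 = 0 := rfl
  have m2 : (2 : ℕ) % 2 = 0 := rfl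
  have m4 : (4 : ℕ) % 2 = 0 := rfl
  have m6 : (6 : ℕ) % 2 = 0 := rfl
  have m1 : (1 : ℕ) % 2 = 1 := rfl
  have m3 : (3 : ℕ) % 2 = 1 := rfl
  have m5 : (5 : ℕ) % 2 = 1 := rfl
  have m7 : (7 : ℕ) % 2 = 1 := rfl
  simp only [m0, m1, m2, m3, m4, m5, m6, m7, he, ho]
  split_ifs <;> ring

/-- **Discrete multisymplectic form formula (temporal-boundary form, 2D)**: for a C²
cell Lagrangian, a solution `φ` of the discrete Euler–Lagrange node equations, and
first variations `V`, `W` along `φ`, the sum over the initial-time cells of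
`ω_p` for the time-`0` slots plus the sum over the final-time cells of `ω_p` for the
time-`N` slots vanishes. -/
theorem discrete_multisymplectic_form_formula_2D
    (N A B : ℕ) (hN : 1 ≤ N) (hA : 1 ≤ A) (hB : 1 ≤ B)
    (L : (Fin 8 → E2) → ℝ) (hL : ContDiff ℝ 2 L)
    (φ : ℕ → ℕ → ℕ → E2)
    (hDEL : ∀ j a b : ℕ, 0 < j → j < N → a ≤ A → b ≤ B →
      (∑ j' ∈ Finset.range N, ∑ a' ∈ Finset.range A, ∑ b' ∈ Finset.range B, ∑ s : Fin 8,
        if cellNode j' a' b' s = (j, a, b) then pgrad L (jet φ j' a' b') s else 0) = 0)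
    (V W : ℕ → ℕ → ℕ → E2)
    (hV : IsFirstVariation N A B L φ V) (hW : IsFirstVariation N A B L φ W) :
    ∑ a ∈ Finset.range A, ∑ b ∈ Finset.range B,
      ((omegaP L φ V W 0 a b 0 + omegaP L φ V W 0 a b 2
          + omegaP L φ V W 0 a b 4 + omegaP L φ V W 0 a b 6)
        + (omegaP L φ V W (N - 1) a b 1 + omegaP L φ V W (N - 1) a b 3
          + omegaP L φ V W (N - 1) a b 5 + omegaP L φ V W (N - 1) a b 7)) = 0 := by
  classical
  have key1 : ∑ j' ∈ Finset.range N, ∑ a' ∈ Finset.range A, ∑ b' ∈ Finset.range B,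
      ∑ p : Fin 8, omegaP L φ V W j' a' b' p = 0 :=
    Finset.sum_eq_zero fun _ _ => Finset.sum_eq_zero fun _ _ =>
      Finset.sum_eq_zero fun _ _ => cell_zero L hL φ V W _ _ _
  have hI := interior_zero N A B L φ V W hV hW
  have step : ∀ j' ∈ Finset.range N,
      ∑ a' ∈ Finset.range A, ∑ b' ∈ Finset.range B, ∑ p : Fin 8, omegaP L φ V W j' a' b' p
        = ((if j' = 0 then ∑ a' ∈ Finset.range A, ∑ b' ∈ Finset.range B,
              (omegaP L φ V W j' a' b' 0 + omegaP L φ V W j' a' b' 2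
                + omegaP L φ V W j' a' b' 4 + omegaP L φ V W j' a' b' 6) else 0)
          + (if j' = N - 1 then ∑ a' ∈ Finset.range A, ∑ b' ∈ Finset.range B,
              (omegaP L φ V W j' a' b' 1 + omegaP L φ V W j' a' b' 3
                + omegaP L φ V W j' a' b' 5 + omegaP L φ V W j' a' b' 7) else 0))
          + ∑ a' ∈ Finset.range A, ∑ b' ∈ Finset.range B, ∑ p : Fin 8,
              (if j' + p.val % 2 = 0 ∨ j' + p.val % 2 = N then 0
                else omegaP L φ V W j' a' b' p) := by
    intro j' hj'
    rw [Finset.mem_range] at hj'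
    calc
      ∑ a' ∈ Finset.range A, ∑ b' ∈ Finset.range B, ∑ p : Fin 8, omegaP L φ V W j' a' b' p
          = ∑ a' ∈ Finset.range A, ∑ b' ∈ Finset.range B,
            (((if j' = 0 then omegaP L φ V W j' a' b' 0 + omegaP L φ V W j' a' b' 2
                + omegaP L φ V W j' a' b' 4 + omegaP L φ V W j' a' b' 6 else 0)
              + (if j' = N - 1 then omegaP L φ V W j' a' b' 1 + omegaP L φ V W j' a' b' 3
                + omegaP L φ V W j' a' b' 5 + omegaP L φ V W j' a' b' 7 else 0))
              + ∑ p : Fin 8, (if j' + p.val % 2 = 0 ∨ j' + p.val % 2 = N then 0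
                else omegaP L φ V W j' a' b' p)) :=
            Finset.sum_congr rfl fun a' _ => Finset.sum_congr rfl fun b' _ =>
              hsplit N L φ V W j' a' b' hj'
      _ = _ := by
            simp only [Finset.sum_add_distrib, Finset.sum_ite_irrel, Finset.sum_const_zero]
  rw [Finset.sum_congr rfl step, Finset.sum_add_distrib, Finset.sum_add_distrib,
    Finset.sum_ite_eq', Finset.sum_ite_eq',
    if_pos (Finset.mem_range.mpr (by omega : (0:ℕ) < N)),
    if_pos (Finset.mem_range.mpr (by omega : N - 1 < N)), hI, add_zero] at key1
  calc
    ∑ a ∈ Finset.range A, ∑ b ∈ Finset.range B,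
      ((omegaP L φ V W 0 a b 0 + omegaP L φ V W 0 a b 2
          + omegaP L φ V W 0 a b 4 + omegaP L φ V W 0 a b 6)
        + (omegaP L φ V W (N - 1) a b 1 + omegaP L φ V W (N - 1) a b 3
          + omegaP L φ V W (N - 1) a b 5 + omegaP L φ V W (N - 1) a b 7))
        = (∑ a ∈ Finset.range A, ∑ b ∈ Finset.range B,
            (omegaP L φ V W 0 a b 0 + omegaP L φ V W 0 a b 2
              + omegaP L φ V W 0 a b 4 + omegaP L φ V W 0 a b 6))
          + ∑ a ∈ Finset.range A, ∑ b ∈ Finset.range B,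
            (omegaP L φ V W (N - 1) a b 1 + omegaP L φ V W (N - 1) a b 3
              + omegaP L φ V W (N - 1) a b 5 + omegaP L φ V W (N - 1) a b 7) := by
          simp only [Finset.sum_add_distrib]
    _ = 0 := key1

end
end
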